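/- arXiv:2508.10250 — 12 statements merged into one kernel-verified Lean document; each statement's English description precedes it below -/
import Mathlib

section
/- Let R be a ring, let t ≥ 1 be an integer, and let C and D' be m×n matrices over R such that ‖C‖₀ ≤ t² and such that for every index j, if the j-th column of C has at most t nonzero entries then the j-th column of D' is equal to the j-th column of C. Then every row of the matrix C − D' has strictly fewer than t nonzero entries; in particular, every row of C − D' is t-sparse. -/
/- `matNnz M` is the number of nonzero entries `‖M‖₀` of a matrix `M`. -/
open Classical in
noncomputable def matNnz {R : Type*} [Zero R] {m n : ℕ}
    (M : Matrix (Fin m) (Fin n) R) : ℕ :=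
  (Finset.univ.filter (fun p : Fin m × Fin n => M p.1 p.2 ≠ 0)).card

/- If `‖C‖₀ ≤ t²` and `D'` agrees with `C` on every column of `C` having at
most `t` nonzero entries, then every row of `C - D'` has strictly fewer than
`t` nonzero entries (in particular, every row of `C - D'` is `t`-sparse). -/
open Classical in
theorem rows_of_diff_sparse {R : Type*} [Ring R] {m n : ℕ} (t : ℕ) (ht : 1 ≤ t)
    (C D' : Matrix (Fin m) (Fin n) R) (hC : matNnz C ≤ t ^ 2)
    (hD' : ∀ j : Fin n,
      (Finset.univ.filter (fun i : Fin m => C i j ≠ 0)).card ≤ t →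
      ∀ i : Fin m, D' i j = C i j) :
    ∀ i : Fin m,
      (Finset.univ.filter (fun j : Fin n => (C - D') i j ≠ 0)).card < t := by
  classical
  intro i
  set H : Finset (Fin n) :=
    Finset.univ.filter (fun j => t < (Finset.univ.filter (fun i : Fin m => C i j ≠ 0)).card)
    with hH
  -- the row's support is contained in H
  have hsub : Finset.univ.filter (fun j : Fin n => (C - D') i j ≠ 0) ⊆ H := by
    intro j hj
    simp only [Finset.mem_filter, Finset.mem_univ, true_and] at hj ⊢
    by_contra h
    simp only [hH, Finset.mem_filter, Finset.mem_univ, true_and, not_lt] at h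
    exact hj (by simp [Matrix.sub_apply, hD' j h i])
  -- counting: matNnz C ≥ ∑ j, column card ≥ H.card * (t+1)
  have hsum : ∑ j : Fin n, (Finset.univ.filter (fun i : Fin m => C i j ≠ 0)).card
      = matNnz C := by
    rw [matNnz]
    rw [Finset.card_eq_sum_card_fiberwise
      (f := fun p : Fin m × Fin n => p.2) (t := Finset.univ) (fun p _ => Finset.mem_univ _)]
    apply Finset.sum_congr rfl
    intro j _
    apply Finset.card_nbij' (fun i => (i, j)) (fun p => p.1)
    · intro i hi; simp_all
    · intro p hp
      simp only [Finset.mem_coe, Finset.mem_filter, Finset.mem_univ, true_and] at hp ⊢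
      exact hp.2 ▸ hp.1
    · intro i hi; simp
    · intro p hp
      simp only [Finset.mem_coe, Finset.mem_filter, Finset.mem_univ, true_and] at hp
      exact Prod.ext rfl hp.2.symm
  have hbound : H.card * (t + 1) ≤ t ^ 2 := by
    calc H.card * (t + 1) = ∑ _j ∈ H, (t + 1) := by simp [mul_comm]
      _ ≤ ∑ j ∈ H, (Finset.univ.filter (fun i : Fin m => C i j ≠ 0)).card := by
          apply Finset.sum_le_sum; intro j hj
          simp only [hH, Finset.mem_filter] at hj; omega
      _ ≤ ∑ j : Fin n, (Finset.univ.filter (fun i : Fin m => C i j ≠ 0)).card :=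
          Finset.sum_le_sum_of_subset (Finset.subset_univ _)
      _ = matNnz C := hsum
      _ ≤ t ^ 2 := hC
  have hHlt : H.card < t := by nlinarith [sq_nonneg t]
  exact lt_of_le_of_lt (Finset.card_le_card hsub) hHlt
end

section
/- (Correctness of the two-pass output-sparse matrix multiplication reduction.) Let R be a ring, let t, m, n ≥ 1 be integers, let H be an m×n matrix over R, and let ℛ : Rᵐ → Rⁿ be a function such that ℛ(Hx) = x for every t-sparse vector x ∈ Rⁿ. Let A, B be n×n matrices over R with ‖AB‖₀ ≤ t², and write C := AB with columns c₁,…,cₙ. Let D' be the n×n matrix whose j-th column is ℛ(H·cⱼ), and let F' be the n×n matrix whose j-th column is ℛ(H·fⱼ), where fⱼ denotes the j-th column of the transpose (C − D')ᵀ. Then D' + (F')ᵀ = AB. -/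
open Matrix

/- `vecNnz x` is the number of nonzero entries `‖x‖₀` of a vector `x`. -/
open Classical in
noncomputable def vecNnz {R : Type*} [Zero R] {n : ℕ} (x : Fin n → R) : ℕ :=
  (Finset.univ.filter (fun i => x i ≠ 0)).card

open Classical in
lemma matNnz_eq_sum_cols {R : Type*} [Zero R] {m n : ℕ}
    (M : Matrix (Fin m) (Fin n) R) :
    matNnz M = ∑ j : Fin n, vecNnz (fun i => M i j) := by
  classical
  unfold matNnz vecNnz
  rw [Finset.card_eq_sum_card_fiberwise
    (f := Prod.snd) (t := Finset.univ) (fun x _ => Finset.mem_univ _)]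
  refine Finset.sum_congr rfl fun j _ => ?_
  refine Finset.card_nbij' (fun p => p.1) (fun i => (i, j)) ?_ ?_ ?_ ?_
  · rintro ⟨a, b⟩ hp
    simp only [Finset.coe_filter, Set.mem_setOf_eq, Finset.mem_filter, Finset.mem_univ, true_and] at hp ⊢
    obtain ⟨h1, h2⟩ := hp
    subst h2; exact h1
  · intro i hi
    simp only [Finset.coe_filter, Set.mem_setOf_eq, Finset.mem_filter, Finset.mem_univ, true_and] at hi ⊢
    exact ⟨hi, trivial⟩
  · rintro ⟨a, b⟩ hp
    simp only [Finset.coe_filter, Set.mem_setOf_eq, Finset.mem_filter, Finset.mem_univ, true_and] at hp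
    simp [hp.2]
  · intro i _; rfl

theorem two_pass_osmm_correct {R : Type*} [Ring R] {m n t : ℕ}
    (hm : 1 ≤ m) (hn : 1 ≤ n) (ht : 1 ≤ t)
    (H : Matrix (Fin m) (Fin n) R) (Rec : (Fin m → R) → (Fin n → R))
    (hRec : ∀ x : Fin n → R, vecNnz x ≤ t → Rec (H.mulVec x) = x)
    (A B : Matrix (Fin n) (Fin n) R) (hAB : matNnz (A * B) ≤ t ^ 2)
    (C D' F' : Matrix (Fin n) (Fin n) R) (hC : C = A * B)
    (hD' : ∀ (j i : Fin n), D' i j = Rec (H.mulVec (fun k => C k j)) i)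
    (hF' : ∀ (j i : Fin n), F' i j = Rec (H.mulVec (fun k => (C - D')ᵀ k j)) i) :
    D' + F'ᵀ = A * B := by
  classical
  -- heavy columns
  set S : Finset (Fin n) :=
    Finset.univ.filter (fun j => t < vecNnz (fun i => C i j)) with hS
  have hCnnz : matNnz C ≤ t ^ 2 := by rw [hC]; exact hAB
  have hScard : S.card ≤ t := by
    by_contra h
    push_neg at h
    have h1 : S.card * (t + 1) ≤ ∑ j ∈ S, vecNnz (fun i => C i j) := by
      calc S.card * (t + 1) = ∑ _j ∈ S, (t + 1) := by
            rw [Finset.sum_const, smul_eq_mul]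
        _ ≤ _ := Finset.sum_le_sum fun j hj => by
            have := (Finset.mem_filter.mp hj).2; omega
    have h2 : ∑ j ∈ S, vecNnz (fun i => C i j) ≤ matNnz C := by
      rw [matNnz_eq_sum_cols]
      exact Finset.sum_le_sum_of_subset (Finset.subset_univ S)
    nlinarith
  -- light columns are recovered exactly
  have hlight : ∀ j : Fin n, j ∉ S → ∀ i, D' i j = C i j := by
    intro j hj i
    have hle : vecNnz (fun i => C i j) ≤ t := by
      by_contra h; exact hj (Finset.mem_filter.mpr ⟨Finset.mem_univ _, by omega⟩)
    rw [hD' j i, hRec _ hle]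
  -- each row of C - D' is t-sparse
  have hrow : ∀ i : Fin n, vecNnz (fun j => (C - D') i j) ≤ t := by
    intro i
    refine le_trans ?_ hScard
    unfold vecNnz
    apply Finset.card_le_card
    intro j hj
    simp only [Finset.mem_filter, Finset.mem_univ, true_and] at hj ⊢
    by_contra h
    exact hj (by simp [Matrix.sub_apply, hlight j h i])
  -- second pass recovers rows of C - D'
  have hF : ∀ i j : Fin n, F' i j = (C - D') j i := by
    intro i j
    rw [hF' j i]
    have := hRec (fun k => (C - D') j k) (hrow j)
    have h2 : (fun k => (C - D')ᵀ k j) = (fun k => (C - D') j k) := by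
      funext k; simp [Matrix.transpose_apply]
    rw [h2, this]
  ext i j
  simp only [Matrix.add_apply, Matrix.transpose_apply, hF j i, Matrix.sub_apply, ← hC]
  abel
end

section
/- (Correctness of the iterative guess-and-check matrix multiplication reduction.) Let R be a ring and n ≥ 1. Suppose that for each integer t with 1 ≤ t, we are given an integer m_t ≥ 1, a matrix H_t ∈ R^{m_t × n}, and a function ℛ_t : R^{m_t} → Rⁿ such that ℛ_t(H_t x) = x for every x ∈ Rⁿ with at most t nonzero entries. Let A, B be n×n matrices over R and set C := AB with columns c₁,…,cₙ. Define recursively: J₀ := {1,…,n} and C'₀ an arbitrary n×n matrix over R; for i = 0, 1, …, ⌈log₂ n⌉, set t_i := 2ⁱ, for each j ∈ J_i set F_{i,j} := ℛ_{t_i}(H_{t_i}·cⱼ), set J_{i+1} := { j ∈ J_i : F_{i,j} ≠ cⱼ }, and let C'_{i+1} be the matrix whose j-th column equals F_{i,j} for j ∈ J_i \ J_{i+1} and equals the j-th column of C'_i otherwise. Then C'_{⌈log₂ n⌉ + 1} = AB. -/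
/- Correctness of the iterative guess-and-check matrix multiplication
reduction: with sparse recovery functions `Rec t` satisfying
`Rec t ((H t).mulVec x) = x` for every `t`-sparse `x`, starting from
`J 0 = [n]` and an arbitrary `C' 0`, and iterating (for `i = 0, 1, …`)
` t_i := 2^i`, `F i j := Rec (2^i) ((H (2^i)) * cⱼ)`,
`J (i+1) := { j ∈ J i : F i j ≠ cⱼ }`, and updating the columns of `C'`
indexed by `J i \ J (i+1)` with the recovered columns, after
`⌈log₂ n⌉ + 1` rounds the result equals `A * B`. -/
open Classical in
theorem guess_and_check_mm_correct {R : Type*} [Ring R] {n : ℕ} (hn : 1 ≤ n)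
    (m : ℕ → ℕ) (hm : ∀ t, 1 ≤ m t)
    (H : (t : ℕ) → Matrix (Fin (m t)) (Fin n) R)
    (Rec : (t : ℕ) → (Fin (m t) → R) → (Fin n → R))
    (hRec : ∀ t, 1 ≤ t → ∀ x : Fin n → R, vecNnz x ≤ t →
      Rec t ((H t).mulVec x) = x)
    (A B C : Matrix (Fin n) (Fin n) R) (hC : C = A * B)
    (J : ℕ → Finset (Fin n)) (C' : ℕ → Matrix (Fin n) (Fin n) R)
    (hJ0 : J 0 = Finset.univ)
    (hJ : ∀ i : ℕ, J (i + 1) = (J i).filter (fun j =>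
      Rec (2 ^ i) ((H (2 ^ i)).mulVec (fun k => C k j)) ≠ (fun k => C k j)))
    (hC' : ∀ i : ℕ, ∀ (i' j : Fin n), C' (i + 1) i' j =
      if j ∈ J i ∧ j ∉ J (i + 1) then
        Rec (2 ^ i) ((H (2 ^ i)).mulVec (fun k => C k j)) i'
      else C' i i' j) :
    C' (Nat.clog 2 n + 1) = A * B := by
  -- key invariant: once j leaves J, its column in C' equals the column of C
  have key : ∀ i : ℕ, ∀ j : Fin n, j ∉ J (i + 1) → ∀ k : Fin n,
      C' (i + 1) k j = C k j := by
    intro i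
    induction i with
    | zero =>
      intro j hj k
      have hj0 : j ∈ J 0 := by simp [hJ0]
      have hrec : Rec (2 ^ 0) ((H (2 ^ 0)).mulVec (fun k => C k j))
          = (fun k => C k j) := by
        by_contra hne
        exact hj (by rw [hJ 0]; exact Finset.mem_filter.2 ⟨hj0, hne⟩)
      rw [hC' 0 k j, if_pos ⟨hj0, hj⟩, hrec]
    | succ i ih =>
      intro j hj k
      by_cases hji : j ∈ J (i + 1)
      · have hrec : Rec (2 ^ (i + 1)) ((H (2 ^ (i + 1))).mulVec (fun k => C k j))
            = (fun k => C k j) := by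
          by_contra hne
          exact hj (by rw [hJ (i + 1)]; exact Finset.mem_filter.2 ⟨hji, hne⟩)
        rw [hC' (i + 1) k j, if_pos ⟨hji, hj⟩, hrec]
      · rw [hC' (i + 1) k j, if_neg (fun h => hji h.1)]
        exact ih j hji k
  -- at round clog 2 n, every column is recovered, so J becomes empty
  have hempty : ∀ j : Fin n, j ∉ J (Nat.clog 2 n + 1) := by
    intro j hj
    rw [hJ] at hj
    have hrec : Rec (2 ^ Nat.clog 2 n)
        ((H (2 ^ Nat.clog 2 n)).mulVec (fun k => C k j)) = (fun k => C k j) := by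
      apply hRec _ (Nat.one_le_two_pow)
      calc vecNnz (fun k => C k j) ≤ n := by
            unfold vecNnz
            exact le_trans (Finset.card_filter_le _ _) (by simp)
        _ ≤ 2 ^ Nat.clog 2 n := Nat.le_pow_clog one_lt_two n
    exact (Finset.mem_filter.1 hj).2 hrec
  ext k j
  rw [← hC]
  exact key (Nat.clog 2 n) j (hempty j) k
end

section
/- Let R be a ring, m ≥ 1, and let y = (y₁,…,y_m) ∈ Rᵐ be a nonzero vector. Then the number of vectors x = (x₁,…,x_m) whose entries all lie in {0_R, 1_R} and which satisfy x₁y₁ + ⋯ + x_m y_m = 0 is at most 2^{m−1}. Equivalently, for x chosen uniformly at random from {0,1}ᵐ, the inner product ⟨x, y⟩ is nonzero with probability at least 1/2. -/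
/- For a nonzero vector `y ∈ Rᵐ`, at most `2^(m-1)` of the `2^m` vectors
`x ∈ {0,1}ᵐ` (encoded by `x : Fin m → Bool`, a coordinate `b : Bool`
representing the ring element `if b then 1 else 0`) satisfy `⟨x, y⟩ = 0`.
Equivalently, for `x` uniformly random in `{0,1}ᵐ`, `⟨x, y⟩ ≠ 0` with
probability at least `1/2`. -/
open Classical in
theorem freivalds_vector_bound {R : Type*} [Ring R] {m : ℕ} (hm : 1 ≤ m)
    (y : Fin m → R) (hy : y ≠ 0) :
    (Finset.univ.filter (fun x : Fin m → Bool =>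
      ∑ i, (if x i then (1 : R) else 0) * y i = 0)).card ≤ 2 ^ (m - 1) := by
  obtain ⟨i, hi⟩ : ∃ i, y i ≠ 0 := by
    by_contra h
    push_neg at h
    exact hy (funext h)
  set S := Finset.univ.filter (fun x : Fin m → Bool =>
      ∑ i, (if x i then (1 : R) else 0) * y i = 0) with hS
  set T := Finset.univ.filter (fun x : Fin m → Bool =>
      ¬ (∑ i, (if x i then (1 : R) else 0) * y i = 0)) with hT
  have hsplit : ∀ x : Fin m → Bool,
      ∑ j, (if x j then (1 : R) else 0) * y j
        = (if x i then (1 : R) else 0) * y i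
          + ∑ j ∈ Finset.univ.erase i, (if x j then (1 : R) else 0) * y j := by
    intro x
    rw [← Finset.add_sum_erase _ _ (Finset.mem_univ i)]
  have key : ∀ x ∈ S, Function.update x i (!x i) ∈ T := by
    intro x hx
    simp only [hS, Finset.mem_filter, Finset.mem_univ, true_and] at hx
    simp only [hT, Finset.mem_filter, Finset.mem_univ, true_and]
    intro hcon
    rw [hsplit] at hx hcon
    have herase : ∑ j ∈ Finset.univ.erase i,
        (if Function.update x i (!x i) j then (1 : R) else 0) * y j
        = ∑ j ∈ Finset.univ.erase i, (if x j then (1 : R) else 0) * y j := by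
      apply Finset.sum_congr rfl
      intro j hj
      rw [Function.update_of_ne (Finset.ne_of_mem_erase hj)]
    rw [herase, Function.update_self] at hcon
    have hsub : ((if !x i then (1 : R) else 0) - (if x i then (1 : R) else 0)) * y i = 0 := by
      rw [sub_mul]
      rw [sub_eq_zero]
      exact add_right_cancel (hcon.trans hx.symm)
    cases hxi : x i <;> simp [hxi] at hsub <;> exact hi hsub
  have hinj : Set.InjOn (fun x : Fin m → Bool => Function.update x i (!x i)) S := by
    intro a _ b _ hab
    funext j
    by_cases hj : j = i
    · subst hj
      have := congrFun hab j
      simp only [Function.update_self] at this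
      exact Bool.not_inj this
    · have := congrFun hab j
      simpa [Function.update_of_ne hj] using this
  have hle : S.card ≤ T.card := Finset.card_le_card_of_injOn _ key hinj
  have hdisj : Disjoint S T := by
    rw [hS, hT]
    exact Finset.disjoint_filter_filter_not _ _ _
  have hunion : S.card + T.card ≤ 2 ^ m := by
    have := Finset.card_union_of_disjoint hdisj
    calc S.card + T.card = (S ∪ T).card := this.symm
      _ ≤ (Finset.univ : Finset (Fin m → Bool)).card := Finset.card_le_card (Finset.subset_univ _)
      _ = 2 ^ m := by simp [Finset.card_univ]
  have h2 : 2 * S.card ≤ 2 ^ m := by omega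
  have : 2 ^ m = 2 * 2 ^ (m - 1) := by
    rw [← pow_succ']
    congr 1
    omega
  omega
end

section
/- Let R be a ring, m ≥ 1, N ≥ 1, and let y ∈ Rᵐ be a nonzero vector. Then the number of N×m matrices X all of whose entries lie in {0_R, 1_R} and which satisfy Xy = 0 (the zero vector of R^N) is at most 2^{Nm − N}. Equivalently, for X chosen uniformly at random from {0,1}^{N×m}, the probability that Xy = 0 is at most 2^{−N}. -/
/- For a nonzero vector `y ∈ Rᵐ`, at most `2^(N*m - N)` of the `2^(N*m)`
matrices `X ∈ {0,1}^{N×m}` (encoded by `X : Fin N → Fin m → Bool`, an entry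
`b : Bool` representing the ring element `if b then 1 else 0`) satisfy
`X y = 0`. Equivalently, for `X` uniformly random in `{0,1}^{N×m}`,
`Pr[X y = 0] ≤ 2^(−N)`. -/
open Classical in
theorem freivalds_matrix_bound {R : Type*} [Ring R] {m N : ℕ}
    (hm : 1 ≤ m) (hN : 1 ≤ N) (y : Fin m → R) (hy : y ≠ 0) :
    (Finset.univ.filter (fun X : Fin N → Fin m → Bool =>
      ∀ k : Fin N, ∑ i, (if X k i then (1 : R) else 0) * y i = 0)).card
      ≤ 2 ^ (N * m - N) := by
  classical
  obtain ⟨j, hj⟩ : ∃ j, y j ≠ 0 := by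
    by_contra h
    push_neg at h
    exact hy (funext h)
  set S : Finset (Fin m → Bool) :=
    Finset.univ.filter (fun v => ∑ i, (if v i then (1 : R) else 0) * y i = 0) with hS
  -- the flip map sends solutions to non-solutions
  have hflip : ∀ v ∈ S, Function.update v j (!v j) ∉ S := by
    intro v hv hv'
    simp only [hS, Finset.mem_filter, Finset.mem_univ, true_and] at hv hv'
    set u := Function.update v j (!v j) with hu
    have hsum : ∀ w : Fin m → Bool,
        ∑ i, (if w i then (1 : R) else 0) * y i
          = (if w j then (1 : R) else 0) * y j
            + ∑ i ∈ Finset.univ.erase j, (if w i then (1 : R) else 0) * y i := by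
      intro w
      rw [← Finset.add_sum_erase _ _ (Finset.mem_univ j)]
    have htail : ∑ i ∈ Finset.univ.erase j, (if u i then (1 : R) else 0) * y i
        = ∑ i ∈ Finset.univ.erase j, (if v i then (1 : R) else 0) * y i := by
      apply Finset.sum_congr rfl
      intro i hi
      have : u i = v i := Function.update_of_ne (Finset.ne_of_mem_erase hi) _ _
      rw [this]
    have huj : u j = !v j := Function.update_self _ _ _
    rw [hsum v] at hv
    rw [hsum u, htail, huj] at hv'
    have : (if v j then (1 : R) else 0) * y j = (if !v j then (1 : R) else 0) * y j := by
      have := hv.trans hv'.symm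
      exact add_right_cancel this
    cases hb : v j
    · simp [hb] at this
      exact hj this.symm
    · simp [hb] at this
      exact hj this
  -- hence |S| ≤ 2^(m-1)
  have hinj : Set.InjOn (fun v => Function.update v j (!v j)) (S : Set (Fin m → Bool)) := by
    intro a _ b _ hab
    have : ∀ i, Function.update a j (!a j) i = Function.update b j (!b j) i :=
      fun i => congrFun hab i
    funext i
    by_cases hij : i = j
    · subst hij
      have := this i
      rw [Function.update_self, Function.update_self] at this
      exact Bool.not_inj this
    · have := this i
      rwa [Function.update_of_ne hij, Function.update_of_ne hij] at this
  have hmaps : ∀ v ∈ S, Function.update v j (!v j) ∈ Finset.univ \ S := by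
    intro v hv
    simp only [Finset.mem_sdiff, Finset.mem_univ, true_and]
    exact hflip v hv
  have hcard_le : S.card ≤ (Finset.univ \ S).card :=
    Finset.card_le_card_of_injOn _ hmaps hinj
  have hcompl : (Finset.univ \ S).card = 2 ^ m - S.card := by
    rw [Finset.card_sdiff_of_subset (Finset.subset_univ S), Finset.card_univ]
    simp [Fintype.card_fun]
  have hScard : S.card ≤ 2 ^ (m - 1) := by
    have h2 : 2 * S.card ≤ 2 ^ m := by
      have hle : S.card ≤ 2 ^ m := by
        calc S.card ≤ Finset.univ.card := Finset.card_le_card (Finset.subset_univ S)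
        _ = 2 ^ m := by simp [Fintype.card_fun]
      omega
    have : 2 ^ m = 2 * 2 ^ (m - 1) := by
      rw [← pow_succ']
      congr 1
      omega
    omega
  -- the matrix set is a pi-set of rows
  have hset : (Finset.univ.filter (fun X : Fin N → Fin m → Bool =>
      ∀ k : Fin N, ∑ i, (if X k i then (1 : R) else 0) * y i = 0))
      = Fintype.piFinset (fun _ : Fin N => S) := by
    ext X
    simp [hS, Fintype.mem_piFinset]
  rw [hset, Fintype.card_piFinset]
  calc ∏ _k : Fin N, S.card ≤ ∏ _k : Fin N, 2 ^ (m - 1) :=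
        Finset.prod_le_prod (fun _ _ => Nat.zero_le _) (fun _ _ => hScard)
    _ = 2 ^ ((m - 1) * N) := by
        rw [Finset.prod_const, Finset.card_univ, Fintype.card_fin, ← pow_mul]
    _ = 2 ^ (N * m - N) := by rw [Nat.sub_mul, one_mul, Nat.mul_comm]
end

section
/- (Correctness of Freivalds-style verification for Column-Wise-MMV.) Let R be a ring, let m, n, p, N ≥ 1, let A ∈ R^{m×n}, B ∈ R^{n×p}, C' ∈ R^{m×p}, and set M := AB − C' with columns M e₁,…,M e_p. For X chosen uniformly at random from the set {0,1}^{N×m} of N×m matrices with entries in {0_R, 1_R}, with probability at least 1 − p/2^N the following holds: for every j ∈ {1,…,p}, the j-th column of XM is nonzero if and only if the j-th column of AB differs from the j-th column of C'. Equivalently, the number of matrices X ∈ {0,1}^{N×m} for which there exists j with M eⱼ ≠ 0 but X(M eⱼ) = 0 is at most p·2^{Nm − N}. -/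
open Classical in
lemma freivalds_row_bound {R : Type*} [Ring R] {m : ℕ} (v : Fin m → R) (hv : v ≠ 0) :
    (Finset.univ.filter (fun x : Fin m → Bool =>
      ∑ i, (if x i then (1 : R) else 0) * v i = 0)).card ≤ 2 ^ (m - 1) := by
  classical
  obtain ⟨i₀, hi₀⟩ : ∃ i, v i ≠ 0 := by
    by_contra h; push_neg at h; exact hv (funext h)
  set S := Finset.univ.filter (fun x : Fin m → Bool =>
      ∑ i, (if x i then (1 : R) else 0) * v i = 0) with hS
  have hsum : ∀ x : Fin m → Bool,
      ∑ i, (if (Function.update x i₀ (!x i₀)) i then (1 : R) else 0) * v i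
        = (∑ i, (if x i then (1 : R) else 0) * v i)
          + ((if !x i₀ then (1 : R) else 0) - (if x i₀ then (1 : R) else 0)) * v i₀ := by
    intro x
    rw [← Finset.sum_erase_add _ _ (Finset.mem_univ i₀)]
    rw [← Finset.sum_erase_add _ _ (Finset.mem_univ i₀)]
    have h1 : ∑ i ∈ Finset.univ.erase i₀,
        (if (Function.update x i₀ (!x i₀)) i then (1 : R) else 0) * v i
        = ∑ i ∈ Finset.univ.erase i₀, (if x i then (1 : R) else 0) * v i := by
      refine Finset.sum_congr rfl fun i hi => ?_
      rw [Function.update_of_ne (Finset.ne_of_mem_erase hi)]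
    rw [h1, Function.update_self]
    generalize (∑ i ∈ Finset.univ.erase i₀, (if x i = true then (1 : R) else 0) * v i) = Y
    cases hb : x i₀ <;> simp <;> ring
  have key : S.card ≤ (Finset.univ \ S).card := by
    apply Finset.card_le_card_of_injOn (fun x => Function.update x i₀ (!x i₀))
    · intro x hx
      simp only [Finset.mem_coe, hS, Finset.mem_filter, Finset.mem_univ, true_and] at hx
      simp only [Finset.mem_coe, Finset.mem_sdiff, Finset.mem_univ, true_and, hS, Finset.mem_filter]
      intro hx'
      rw [hsum x, hx, zero_add] at hx'
      rcases Bool.eq_false_or_eq_true (x i₀) with hb | hb <;>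
        simp [hb] at hx' <;> exact hi₀ hx'
    · intro a _ b _ hab
      funext i
      by_cases hi : i = i₀
      · subst hi
        have := congrFun hab i
        simp only [Function.update_self] at this
        exact Bool.not_inj this
      · have := congrFun hab i
        simpa only [Function.update_of_ne hi] using this
  have hcard : (Finset.univ \ S).card = 2 ^ m - S.card := by
    rw [Finset.card_sdiff_of_subset (Finset.subset_univ S), Finset.card_univ]
    congr 1
    simp [Fintype.card_fun]
  have hm : 1 ≤ m := i₀.pos
  have h2 : 2 ^ m = 2 * 2 ^ (m - 1) := by
    cases m with
    | zero => omega
    | succ k => rw [Nat.succ_sub_one, pow_succ]; ring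
  have hle : S.card ≤ 2 ^ m := by
    calc S.card ≤ Fintype.card (Fin m → Bool) := Finset.card_le_univ S
    _ = 2 ^ m := by simp [Fintype.card_fun]
  omega

open Classical in
theorem freivalds_colwise_mmv {R : Type*} [Ring R] {m n p N : ℕ}
    (hm : 1 ≤ m) (hn : 1 ≤ n) (hp : 1 ≤ p) (hN : 1 ≤ N)
    (A : Matrix (Fin m) (Fin n) R) (B : Matrix (Fin n) (Fin p) R)
    (C' : Matrix (Fin m) (Fin p) R)
    (M : Matrix (Fin m) (Fin p) R) (hM : M = A * B - C') :
    (Finset.univ.filter (fun X : Fin N → Fin m → Bool =>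
      ∃ j : Fin p, (fun i : Fin m => M i j) ≠ 0 ∧
        ∀ k : Fin N, ∑ i, (if X k i then (1 : R) else 0) * M i j = 0)).card
      ≤ p * 2 ^ (N * m - N) := by
  classical
  set T : Fin p → Finset (Fin N → Fin m → Bool) := fun j =>
    Finset.univ.filter (fun X => (fun i : Fin m => M i j) ≠ 0 ∧
      ∀ k : Fin N, ∑ i, (if X k i then (1 : R) else 0) * M i j = 0) with hT
  have hsub : (Finset.univ.filter (fun X : Fin N → Fin m → Bool =>
      ∃ j : Fin p, (fun i : Fin m => M i j) ≠ 0 ∧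
        ∀ k : Fin N, ∑ i, (if X k i then (1 : R) else 0) * M i j = 0))
      ⊆ Finset.univ.biUnion T := by
    intro X hX
    simp only [Finset.mem_filter, Finset.mem_univ, true_and] at hX
    obtain ⟨j, hj⟩ := hX
    exact Finset.mem_biUnion.mpr ⟨j, Finset.mem_univ _, by
      simp only [hT, Finset.mem_filter, Finset.mem_univ, true_and]; exact hj⟩
  have hTj : ∀ j, (T j).card ≤ 2 ^ (N * m - N) := by
    intro j
    by_cases hcol : (fun i : Fin m => M i j) = 0
    · have : T j = ∅ := by
        rw [Finset.eq_empty_iff_forall_notMem]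
        intro X hX
        simp only [hT, Finset.mem_filter] at hX
        exact hX.2.1 hcol
      simp [this]
    · set S := Finset.univ.filter (fun x : Fin m → Bool =>
        ∑ i, (if x i then (1 : R) else 0) * M i j = 0) with hSdef
      have hsub2 : T j ⊆ Fintype.piFinset (fun _ : Fin N => S) := by
        intro X hX
        simp only [hT, Finset.mem_filter] at hX
        rw [Fintype.mem_piFinset]
        intro k
        simp only [hSdef, Finset.mem_filter, Finset.mem_univ, true_and]
        exact hX.2.2 k
      calc (T j).card ≤ (Fintype.piFinset (fun _ : Fin N => S)).card :=
            Finset.card_le_card hsub2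
        _ = S.card ^ N := by
            rw [Fintype.card_piFinset]; simp
        _ ≤ (2 ^ (m - 1)) ^ N :=
            Nat.pow_le_pow_left (freivalds_row_bound _ hcol) N
        _ = 2 ^ (N * m - N) := by
            rw [← pow_mul]
            congr 1
            cases m with
            | zero => omega
            | succ m' => rw [Nat.succ_sub_one, Nat.mul_succ, Nat.add_sub_cancel,
                Nat.mul_comm]
  calc _ ≤ (Finset.univ.biUnion T).card := Finset.card_le_card hsub
    _ ≤ ∑ j : Fin p, (T j).card := Finset.card_biUnion_le
    _ ≤ ∑ _j : Fin p, 2 ^ (N * m - N) := Finset.sum_le_sum fun j _ => hTj j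
    _ = p * 2 ^ (N * m - N) := by simp [Finset.sum_const, Finset.card_univ]
end

section
/- Let f be a real-valued function on triples of nonnegative real numbers satisfying: (i) positive homogeneity, f(λa, λb, λc) = λ·f(a, b, c) for all λ ≥ 0 and all nonnegative a, b, c; (ii) subadditivity, f(a+a', b+b', c+c') ≤ f(a, b, c) + f(a', b', c') for all nonnegative arguments; and (iii) invariance under permutations of its three arguments. Then for all α, β, γ ∈ [0, 1] with β + γ ≥ 1, one has f(α, β, γ) ≤ f(α, 1, β + γ − 1). -/
/- If `f` on triples of nonnegative reals is positively homogeneous,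
subadditive, and invariant under permutations of its three arguments
(the two transpositions below generate all permutations), then for all
`α, β, γ ∈ [0,1]` with `β + γ ≥ 1` we have `f α β γ ≤ f α 1 (β + γ - 1)`.
This abstracts the inequality `ω(α,β,γ) ≤ ω(α,1,β+γ−1)` for the rectangular
matrix multiplication exponent. -/
theorem rect_mm_exponent_ineq (f : ℝ → ℝ → ℝ → ℝ)
    (hhom : ∀ l a b c : ℝ, 0 ≤ l → 0 ≤ a → 0 ≤ b → 0 ≤ c →
      f (l * a) (l * b) (l * c) = l * f a b c)
    (hsub : ∀ a a' b b' c c' : ℝ, 0 ≤ a → 0 ≤ a' → 0 ≤ b → 0 ≤ b' → 0 ≤ c → 0 ≤ c' →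
      f (a + a') (b + b') (c + c') ≤ f a b c + f a' b' c')
    (hswap12 : ∀ a b c : ℝ, 0 ≤ a → 0 ≤ b → 0 ≤ c → f a b c = f b a c)
    (hswap23 : ∀ a b c : ℝ, 0 ≤ a → 0 ≤ b → 0 ≤ c → f a b c = f a c b)
    (α β γ : ℝ) (hα : α ∈ Set.Icc (0 : ℝ) 1) (hβ : β ∈ Set.Icc (0 : ℝ) 1)
    (hγ : γ ∈ Set.Icc (0 : ℝ) 1) (hβγ : 1 ≤ β + γ) :
    f α β γ ≤ f α 1 (β + γ - 1) := by
  obtain ⟨hα0, hα1⟩ := hα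
  obtain ⟨hβ0, hβ1⟩ := hβ
  obtain ⟨hγ0, hγ1⟩ := hγ
  rcases eq_or_lt_of_le (add_le_add hβ1 hγ1) with h2 | h2
  · -- β + γ = 2, so β = γ = 1
    have hβ' : β = 1 := by linarith
    have hγ' : γ = 1 := by linarith
    simp [hβ', hγ']
  · set d : ℝ := 2 - β - γ with hd
    have hd0 : 0 < d := by simp only [hd]; linarith
    set l : ℝ := (1 - γ) / d with hl
    set m : ℝ := (1 - β) / d with hm
    have hl0 : 0 ≤ l := div_nonneg (by linarith) hd0.le
    have hm0 : 0 ≤ m := div_nonneg (by linarith) hd0.le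
    have hlm : l + m = 1 := by
      rw [hl, hm, ← add_div, div_eq_one_iff_eq hd0.ne', hd]; ring
    have hs0 : (0:ℝ) ≤ β + γ - 1 := by linarith
    have h1 : f α β γ = f (l * α + m * α) (l * 1 + m * (β + γ - 1))
        (l * (β + γ - 1) + m * 1) := by
      congr 1
      · rw [← add_mul, hlm, one_mul]
      · have hld : l * d = 1 - γ := by rw [hl]; exact div_mul_cancel₀ _ hd0.ne'
        rw [hd] at hld
        linear_combination (-(β + γ - 1)) * hlm - hld
      · have hmd : m * d = 1 - β := by rw [hm]; exact div_mul_cancel₀ _ hd0.ne'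
        rw [hd] at hmd
        linear_combination (-(β + γ - 1)) * hlm - hmd
    rw [h1]
    calc f (l * α + m * α) (l * 1 + m * (β + γ - 1)) (l * (β + γ - 1) + m * 1)
        ≤ f (l * α) (l * 1) (l * (β + γ - 1)) + f (m * α) (m * (β + γ - 1)) (m * 1) :=
          hsub _ _ _ _ _ _ (by positivity) (by positivity) (by positivity)
            (by positivity) (mul_nonneg hl0 hs0) (by positivity)
      _ = l * f α 1 (β + γ - 1) + m * f α (β + γ - 1) 1 := by
          rw [hhom l α 1 (β + γ - 1) hl0 hα0 zero_le_one hs0,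
            hhom m α (β + γ - 1) 1 hm0 hα0 hs0 zero_le_one]
      _ = l * f α 1 (β + γ - 1) + m * f α 1 (β + γ - 1) := by
          rw [hswap23 α (β + γ - 1) 1 hα0 hs0 zero_le_one]
      _ = f α 1 (β + γ - 1) := by rw [← add_mul, hlm, one_mul]
end

section
/- (Isolating measurements in unbalanced expanders.) Let d ≥ 1 and K ≥ 1 be integers and ε ∈ [0, 1). Let G be a bipartite graph with finite left vertex set L and right vertex set R in which every left vertex has exactly d distinct neighbors, and suppose G is a (K, ε)-unbalanced expander: for every S ⊆ L with |S| ≤ K, the neighborhood satisfies |N(S)| ≥ (1 − ε)·d·|S|. Then for every X ⊆ L with |X| ≤ K, the number of right vertices r ∈ R having exactly one neighbor in X is at least (1 − 2ε)·d·|X|. -/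
/- Isolating measurements in unbalanced expanders: if `G` is a `d`-left-regular
bipartite graph (left vertices `L`, right vertices `V`, neighborhoods
`N : L → Finset V` with `|N l| = d`) that is a `(K, ε)`-unbalanced expander,
meaning `|N(S)| ≥ (1 − ε) d |S|` for every `S ⊆ L` with `|S| ≤ K`, then for
every `X ⊆ L` with `|X| ≤ K` the number of right vertices having exactly one
neighbor in `X` is at least `(1 − 2ε) d |X|`. -/
theorem expander_isolating_measurements {L V : Type*}
    [Fintype L] [Fintype V] [DecidableEq L] [DecidableEq V]
    (d K : ℕ) (hd : 1 ≤ d) (hK : 1 ≤ K) (ε : ℝ) (hε0 : 0 ≤ ε) (hε1 : ε < 1)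
    (N : L → Finset V) (hreg : ∀ l : L, (N l).card = d)
    (hexp : ∀ S : Finset L, S.card ≤ K →
      (1 - ε) * d * S.card ≤ ((S.biUnion N).card : ℝ)) :
    ∀ X : Finset L, X.card ≤ K →
      (1 - 2 * ε) * d * X.card ≤
        ((Finset.univ.filter
          (fun r : V => (X.filter (fun l => r ∈ N l)).card = 1)).card : ℝ) := by
  intro X hX
  classical
  set deg : V → ℕ := fun r => (X.filter (fun l => r ∈ N l)).card with hdeg
  set U := X.biUnion N with hU
  set A := Finset.univ.filter (fun r : V => deg r = 1) with hA
  -- double counting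
  have hsum : ∑ r : V, deg r = d * X.card := by
    have : ∑ r : V, deg r = ∑ l ∈ X, (N l).card := by
      simp only [hdeg, Finset.card_filter]
      rw [Finset.sum_comm]
      refine Finset.sum_congr rfl (fun l hl => ?_)
      rw [Finset.sum_ite_mem, Finset.univ_inter, Finset.sum_const, smul_eq_mul, mul_one]
    rw [this]
    simp [hreg, Finset.sum_const, Nat.mul_comm]
  have hmemU : ∀ r : V, r ∈ U ↔ 1 ≤ deg r := by
    intro r
    simp only [hU, Finset.mem_biUnion, hdeg, Nat.one_le_iff_ne_zero,
      Finset.card_ne_zero, Finset.filter_nonempty_iff]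
  have hsumU : ∑ r ∈ U, deg r = d * X.card := by
    rw [← hsum]
    refine Finset.sum_subset (Finset.subset_univ _) ?_
    intro r _ hr
    by_contra h
    exact hr ((hmemU r).2 (Nat.one_le_iff_ne_zero.2 h))
  have hAU : A ⊆ U := by
    intro r hr
    rw [hA, Finset.mem_filter] at hr
    exact (hmemU r).2 (by omega)
  -- lower bound sum over U
  have hlb : 2 * U.card - A.card ≤ ∑ r ∈ U, deg r := by
    have : ∑ r ∈ U, deg r = ∑ r ∈ U ∩ A, deg r + ∑ r ∈ U \ A, deg r := by
      rw [Finset.sum_inter_add_sum_sdiff]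
    rw [this]
    have h1 : ∑ r ∈ U ∩ A, deg r = (U ∩ A).card := by
      rw [Finset.card_eq_sum_ones]
      refine Finset.sum_congr rfl (fun r hr => ?_)
      have := (Finset.mem_inter.1 hr).2
      rw [hA, Finset.mem_filter] at this
      exact this.2
    have h2 : 2 * (U \ A).card ≤ ∑ r ∈ U \ A, deg r := by
      calc 2 * (U \ A).card = ∑ _r ∈ U \ A, 2 := by
            rw [Finset.sum_const, smul_eq_mul, Nat.mul_comm]
        _ ≤ ∑ r ∈ U \ A, deg r := by
            refine Finset.sum_le_sum (fun r hr => ?_)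
            have hrU := (Finset.mem_sdiff.1 hr).1
            have hrA := (Finset.mem_sdiff.1 hr).2
            have h1 := (hmemU r).1 hrU
            rw [hA, Finset.mem_filter] at hrA
            push_neg at hrA
            have := hrA (Finset.mem_univ r)
            omega
    have hcardA : (U ∩ A).card = A.card := by
      rw [Finset.inter_eq_right.2 hAU]
    have hAleU : A.card ≤ U.card := Finset.card_le_card hAU
    have hcardSd : (U \ A).card = U.card - A.card := Finset.card_sdiff_of_subset hAU
    omega
  -- conclude over ℝ
  have hkey : 2 * U.card ≤ A.card + d * X.card := by omega
  have hkeyR : 2 * (U.card : ℝ) ≤ (A.card : ℝ) + (d : ℝ) * X.card := by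
    exact_mod_cast hkey
  have hexpX := hexp X hX
  rw [← hU] at hexpX
  have := hexpX
  nlinarith [this, hkeyR]
end

section
/- (Recovery of an isolated coordinate from one block of measurements.) Let R be a ring, ℓ ≥ 1, and n = 2^ℓ − 1. Let B be the ℓ×n matrix with entries in {0_R, 1_R} whose j-th column is the binary expansion of j (so that B_{k,j} = 1 if and only if the bit of j with place value 2^{ℓ−k} is 1). Let A be an m'×n matrix with entries in {0_R, 1_R}, and let H := A ⊗_r B be the row tensor Hadamard product of A and B. Suppose x ∈ Rⁿ, i ∈ {1,…,m'}, and j ∈ {1,…,n} satisfy: x_j ≠ 0, A_{i,j} = 1, and A_{i,l} = 0 for every l ≠ j with x_l ≠ 0 (i.e., the support of row i of A intersects the support of x exactly in {j}). Then for every k ∈ {1,…,ℓ}, the entry of Hx at index (i−1)ℓ + k equals x_j if B_{k,j} = 1 and equals 0 if B_{k,j} = 0. Consequently, j = Σ_{k : (Hx)_{(i−1)ℓ+k} ≠ 0} 2^{ℓ−k}, and x_j is the common value of all nonzero entries of this block. -/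
open Matrix

lemma sum_testBit_aux : ∀ (ℓ m : ℕ), m < 2 ^ ℓ →
    m = ∑ k ∈ Finset.range ℓ, if m.testBit k then 2 ^ k else 0 := by
  intro ℓ
  induction ℓ with
  | zero => intro m hm; interval_cases m; simp
  | succ ℓ ih =>
    intro m hm
    rw [Finset.sum_range_succ']
    have hdiv : m / 2 < 2 ^ ℓ := by
      rw [Nat.div_lt_iff_lt_mul (by norm_num)]
      calc m < 2 ^ (ℓ + 1) := hm
        _ = 2 ^ ℓ * 2 := by ring
    have h2 : ∑ k ∈ Finset.range ℓ, (if m.testBit (k + 1) then 2 ^ (k + 1) else 0)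
        = 2 * (m / 2) := by
      rw [ih (m / 2) hdiv, Finset.mul_sum]
      apply Finset.sum_congr rfl
      intro k _
      rw [Nat.testBit_add_one]
      split <;> ring
    rw [h2, Nat.testBit_zero]
    rcases Nat.even_or_odd m with h | h
    · have : m % 2 = 0 := Nat.even_iff.mp h
      simp [Nat.odd_iff, this]
      omega
    · have : m % 2 = 1 := Nat.odd_iff.mp h
      simp [Nat.odd_iff, this]
      omega

open Classical in
theorem isolated_coordinate_recovery {R : Type*} [Ring R] {ℓ m' : ℕ}
    (hl : 1 ≤ ℓ) {n : ℕ} (hn : n = 2 ^ ℓ - 1)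
    (B : Matrix (Fin ℓ) (Fin n) R)
    (hB : ∀ (k : Fin ℓ) (j : Fin n),
      B k j = if Nat.testBit ((j : ℕ) + 1) (ℓ - 1 - (k : ℕ)) then 1 else 0)
    (A : Matrix (Fin m') (Fin n) R)
    (hA01 : ∀ (i : Fin m') (j : Fin n), A i j = 0 ∨ A i j = 1)
    (H : Matrix (Fin m' × Fin ℓ) (Fin n) R)
    (hH : ∀ (i : Fin m') (k : Fin ℓ) (j : Fin n), H (i, k) j = A i j * B k j)
    (x : Fin n → R) (i : Fin m') (j : Fin n)
    (hxj : x j ≠ 0) (hAij : A i j = 1)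
    (hiso : ∀ l : Fin n, l ≠ j → x l ≠ 0 → A i l = 0) :
    (∀ k : Fin ℓ, H.mulVec x (i, k) =
        if Nat.testBit ((j : ℕ) + 1) (ℓ - 1 - (k : ℕ)) then x j else 0) ∧
    (j : ℕ) + 1 =
      ∑ k ∈ Finset.univ.filter (fun k : Fin ℓ => H.mulVec x (i, k) ≠ 0),
        2 ^ (ℓ - 1 - (k : ℕ)) := by
  have h1 : ∀ k : Fin ℓ, H.mulVec x (i, k) =
      if Nat.testBit ((j : ℕ) + 1) (ℓ - 1 - (k : ℕ)) then x j else 0 := by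
    intro k
    rw [Matrix.mulVec, dotProduct]
    rw [Finset.sum_eq_single j]
    · rw [hH, hB, hAij]
      split <;> simp
    · intro l _ hl
      rw [hH]
      by_cases hx : x l = 0
      · rw [hx, mul_zero]
      · rw [hiso l hl hx, zero_mul, zero_mul]
    · simp
  refine ⟨h1, ?_⟩
  have hfilt : Finset.univ.filter (fun k : Fin ℓ => H.mulVec x (i, k) ≠ 0)
      = Finset.univ.filter (fun k : Fin ℓ =>
          Nat.testBit ((j : ℕ) + 1) (ℓ - 1 - (k : ℕ))) := by
    apply Finset.filter_congr
    intro k _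
    rw [h1 k]
    constructor
    · intro hne
      by_contra hc
      simp [hc] at hne
    · intro ht
      simpa [ht] using hxj
  rw [hfilt, Finset.sum_filter]
  have hjlt : (j : ℕ) + 1 < 2 ^ ℓ := by
    have := j.isLt
    have h2 : 1 ≤ 2 ^ ℓ := Nat.one_le_two_pow
    omega
  rw [Fin.sum_univ_eq_sum_range
    (fun k => if Nat.testBit ((j : ℕ) + 1) (ℓ - 1 - k) then 2 ^ (ℓ - 1 - k) else 0)]
  rw [Finset.sum_range_reflect
    (fun k => if Nat.testBit ((j : ℕ) + 1) k then 2 ^ k else 0) ℓ]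
  exact sum_testBit_aux ℓ ((j : ℕ) + 1) hjlt
end

section
/- (From halving recovery to exact recovery.) Let R be a ring, let m, n, t ≥ 1 be integers, and let H be an m×n matrix over R. Suppose there exists a function Red : Rᵐ → Rⁿ such that for every vector x ∈ Rⁿ with ‖x‖₀ ≤ t, one has ‖x − Red(Hx)‖₀ ≤ ‖x‖₀ / 2. Then there exists a function Rec : Rᵐ → Rⁿ such that Rec(Hx) = x for every x ∈ Rⁿ with ‖x‖₀ ≤ t. -/
lemma vecNnz_eq_zero {R : Type*} [Zero R] {n : ℕ} {x : Fin n → R}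
    (h : vecNnz x = 0) : x = 0 := by
  classical
  funext i
  simp only [Pi.zero_apply]
  by_contra hi
  have : i ∈ Finset.univ.filter (fun i => x i ≠ 0) := by
    simp [hi]
  rw [vecNnz, Finset.card_eq_zero] at h
  simp [h] at this

/- From halving recovery to exact recovery: if `Red : Rᵐ → Rⁿ` satisfies
`‖x − Red (H x)‖₀ ≤ ‖x‖₀ / 2` for every `t`-sparse `x`, then there is
`Rec : Rᵐ → Rⁿ` with `Rec (H x) = x` for every `t`-sparse `x`. -/
theorem halving_to_exact_recovery {R : Type*} [Ring R] {m n t : ℕ}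
    (hm : 1 ≤ m) (hn : 1 ≤ n) (ht : 1 ≤ t)
    (H : Matrix (Fin m) (Fin n) R) (Red : (Fin m → R) → (Fin n → R))
    (hRed : ∀ x : Fin n → R, vecNnz x ≤ t →
      vecNnz (x - Red (H.mulVec x)) ≤ vecNnz x / 2) :
    ∃ Rec : (Fin m → R) → (Fin n → R),
      ∀ x : Fin n → R, vecNnz x ≤ t → Rec (H.mulVec x) = x := by
  classical
  -- iterate Red
  let g : ℕ → (Fin m → R) → (Fin n → R) := fun k =>
    Nat.rec (fun _ => 0)
      (fun _ gk z => Red z + gk (z - H.mulVec (Red z))) k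
  have key : ∀ k : ℕ, ∀ x : Fin n → R, vecNnz x ≤ t → vecNnz x < 2 ^ k →
      g k (H.mulVec x) = x := by
    intro k
    induction k with
    | zero =>
      intro x _ hx
      have : vecNnz x = 0 := by omega
      simp [g, vecNnz_eq_zero this]
    | succ k ih =>
      intro x hxt hx
      set y := x - Red (H.mulVec x) with hy
      have h1 : vecNnz y ≤ vecNnz x / 2 := hRed x hxt
      have h2 : vecNnz y ≤ t := le_trans h1 (le_trans (Nat.div_le_self _ _) hxt)
      have h3 : vecNnz y < 2 ^ k := by
        have : vecNnz x / 2 < 2 ^ k := by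
          have := hx
          rw [pow_succ] at this
          omega
        omega
      have hrec := ih y h2 h3
      have hHy : H.mulVec y = H.mulVec x - H.mulVec (Red (H.mulVec x)) := by
        rw [hy, Matrix.mulVec_sub]
      show Red (H.mulVec x) + g k (H.mulVec x - H.mulVec (Red (H.mulVec x))) = x
      rw [← hHy, hrec, hy]
      abel
  refine ⟨g t, fun x hx => key t x hx ?_⟩
  exact lt_of_le_of_lt hx (Nat.lt_two_pow_self (n := t))
end

section
/- (Halving sparse recovery from an unbalanced expander — Reduce lemma.) Let R be a ring, ℓ ≥ 1, n = 2^ℓ − 1, and let t, d, m' ≥ 1 be integers. Let A be the m'×n adjacency matrix (with entries in {0_R, 1_R}) of a d-left-regular bipartite graph with left vertex set [n] and right vertex set [m'] that is a (t, 1/12)-unbalanced expander. Let B be the ℓ×n matrix with entries in {0_R, 1_R} whose j-th column is the binary expansion of j, and let H := A ⊗_r B ∈ R^{(m'ℓ)×n} be their row tensor Hadamard product. Then there exists a function Red : R^{m'ℓ} → Rⁿ such that for every vector x ∈ Rⁿ with ‖x‖₀ ≤ t, one has ‖x − Red(Hx)‖₀ ≤ ‖x‖₀ / 2. -/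
open Matrix

lemma sum_testBit (m : ℕ) : ∀ l : ℕ, ∑ p ∈ Finset.range l, (if m.testBit p then 2^p else 0) = m % 2^l := by
  intro l
  induction l with
  | zero => simp [Nat.mod_one]
  | succ l ih =>
    rw [Finset.sum_range_succ, ih, pow_succ, Nat.mod_mul]
    have hb : m.testBit l = decide (m / 2^l % 2 = 1) := Nat.testBit_eq_decide_div_mod_eq
    have h2 : m / 2^l % 2 < 2 := Nat.mod_lt _ (by norm_num)
    interval_cases h : (m / 2^l % 2) <;> simp [hb, h]

section Aux
open Classical
variable {R : Type*} [Ring R] {ℓ m' n : ℕ}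

noncomputable def decNum (y : Fin ℓ → R) : ℕ :=
  ∑ k : Fin ℓ, if y k ≠ 0 then 2 ^ (ℓ - 1 - (k : ℕ)) else 0

noncomputable def decVal (y : Fin ℓ → R) : R :=
  if h : ∃ k, y k ≠ 0 then y h.choose else 0

noncomputable def vote (w : Fin m' × Fin ℓ → R) (i : Fin m') : Option (Fin n × R) :=
  if h : 1 ≤ decNum (fun k => w (i, k)) ∧ decNum (fun k => w (i, k)) ≤ n then
    some (⟨decNum (fun k => w (i, k)) - 1, by omega⟩, decVal (fun k => w (i, k)))
  else none

noncomputable def redFun (nbrs : Fin n → Finset (Fin m')) (T : ℕ)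
    (w : Fin m' × Fin ℓ → R) (j : Fin n) : R :=
  if h : ∃ v : R, v ≠ 0 ∧
      T ≤ ((nbrs j).filter (fun i => vote (n := n) w i = some (j, v))).card
  then h.choose else 0

lemma decNum_eq (hn : n = 2 ^ ℓ - 1) (j : Fin n) (v : R) (hv : v ≠ 0)
    (y : Fin ℓ → R)
    (hy : ∀ k : Fin ℓ, y k = if Nat.testBit ((j : ℕ) + 1) (ℓ - 1 - (k : ℕ)) then v else 0) :
    decNum y = (j : ℕ) + 1 := by
  have hjlt : (j : ℕ) + 1 < 2 ^ ℓ := by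
    have := j.isLt; omega
  have h1 : decNum y = ∑ k : Fin ℓ,
      (if Nat.testBit ((j : ℕ) + 1) (ℓ - 1 - (k : ℕ)) then 2 ^ (ℓ - 1 - (k : ℕ)) else 0) := by
    unfold decNum
    refine Finset.sum_congr rfl fun k _ => ?_
    rw [hy k]
    by_cases hb : Nat.testBit ((j : ℕ) + 1) (ℓ - 1 - (k : ℕ)) <;> simp [hb, hv]
  rw [h1, Fin.sum_univ_eq_sum_range
    (fun p => if Nat.testBit ((j : ℕ) + 1) (ℓ - 1 - p) then 2 ^ (ℓ - 1 - p) else 0),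
    Finset.sum_range_reflect (fun p => if Nat.testBit ((j : ℕ) + 1) p then 2 ^ p else 0) ℓ,
    sum_testBit]
  exact Nat.mod_eq_of_lt hjlt

lemma decVal_eq (hn : n = 2 ^ ℓ - 1) (j : Fin n) (v : R) (hv : v ≠ 0)
    (y : Fin ℓ → R)
    (hy : ∀ k : Fin ℓ, y k = if Nat.testBit ((j : ℕ) + 1) (ℓ - 1 - (k : ℕ)) then v else 0) :
    decVal y = v := by
  have hd : decNum y = (j : ℕ) + 1 := decNum_eq hn j v hv y hy
  have hex : ∃ k, y k ≠ 0 := by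
    by_contra hc
    push_neg at hc
    have : decNum y = 0 := by
      unfold decNum; refine Finset.sum_eq_zero fun k _ => by simp [hc k]
    omega
  rw [decVal, dif_pos hex]
  have h0 := hex.choose_spec
  rw [hy hex.choose] at h0 ⊢
  by_cases hb : Nat.testBit ((j : ℕ) + 1) (ℓ - 1 - (hex.choose : ℕ)) <;> simp [hb] at h0 ⊢

lemma vote_eq (hn : n = 2 ^ ℓ - 1) (j : Fin n) (v : R) (hv : v ≠ 0)
    (w : Fin m' × Fin ℓ → R) (i : Fin m')
    (hy : ∀ k : Fin ℓ, w (i, k) =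
      if Nat.testBit ((j : ℕ) + 1) (ℓ - 1 - (k : ℕ)) then v else 0) :
    vote (n := n) w i = some (j, v) := by
  have hd : decNum (fun k => w (i, k)) = (j : ℕ) + 1 := decNum_eq hn j v hv _ hy
  have hdv : decVal (fun k => w (i, k)) = v := decVal_eq hn j v hv _ hy
  have hcond : 1 ≤ decNum (fun k => w (i, k)) ∧ decNum (fun k => w (i, k)) ≤ n := by
    rw [hd]; exact ⟨by omega, by have := j.isLt; omega⟩
  rw [vote, dif_pos hcond]
  simp only [Option.some.injEq, Prod.mk.injEq]
  exact ⟨Fin.ext (by simp [hd]), hdv⟩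

lemma vote_none (w : Fin m' × Fin ℓ → R) (i : Fin m')
    (hy : ∀ k : Fin ℓ, w (i, k) = 0) :
    vote (n := n) w i = none := by
  have hd : decNum (fun k => w (i, k)) = 0 := by
    unfold decNum; exact Finset.sum_eq_zero fun k _ => by simp [hy k]
  rw [vote, dif_neg]
  rw [hd]; omega

end Aux

lemma arith_main (d T c scard Ncard Ucard Mcard eM b1 b2 : ℕ)
    (hd : 1 ≤ d)
    (hexpS : (1 - 1/12 : ℝ) * d * scard ≤ Ncard)
    (hUM : Ucard + Mcard = Ncard)
    (hsplit : Ucard + eM = d * scard)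
    (h2M : 2 * Mcard ≤ eM)
    (hBout : T * b2 ≤ Mcard)
    (hBin : c * b1 ≤ eM)
    (hc2 : d ≤ 2 * c)
    (hT2 : d + 1 ≤ 2 * T) :
    2 * (b1 + b2) ≤ scard := by
  have hdR : (1 : ℝ) ≤ (d : ℝ) := by exact_mod_cast hd
  have hUMR : (Ucard : ℝ) + Mcard = Ncard := by exact_mod_cast hUM
  have hsplitR : (Ucard : ℝ) + eM = d * scard := by exact_mod_cast hsplit
  have h2MR : 2 * (Mcard : ℝ) ≤ eM := by exact_mod_cast h2M
  have hBoutR : (b2 : ℝ) * T ≤ Mcard := by rw [mul_comm]; exact_mod_cast hBout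
  have hBinR : (b1 : ℝ) * c ≤ eM := by rw [mul_comm]; exact_mod_cast hBin
  have hc2R : (d : ℝ) ≤ 2 * (c : ℝ) := by exact_mod_cast hc2
  have hT2R : (d : ℝ) + 1 ≤ 2 * (T : ℝ) := by exact_mod_cast hT2
  have hMcR : (Mcard : ℝ) ≤ d * scard / 12 := by linarith
  have heMR : (eM : ℝ) ≤ d * scard / 6 := by linarith
  have hs0 : (0 : ℝ) ≤ (scard : ℝ) := Nat.cast_nonneg _
  have hb1 : (b1 : ℝ) ≤ scard / 3 := by
    have h1 : (b1 : ℝ) * d ≤ (scard / 3 : ℝ) * d := by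
      nlinarith [mul_nonneg (Nat.cast_nonneg b1 : (0:ℝ) ≤ (b1 : ℝ))
        (by linarith : (0:ℝ) ≤ 2 * (c : ℝ) - d)]
    exact le_of_mul_le_mul_right h1 (by linarith)
  have hb2 : (b2 : ℝ) ≤ scard / 6 := by
    have h1 : (b2 : ℝ) * (d + 1) ≤ (scard / 6 : ℝ) * (d + 1) := by
      nlinarith [mul_nonneg (Nat.cast_nonneg b2 : (0:ℝ) ≤ (b2 : ℝ))
        (by linarith : (0:ℝ) ≤ 2 * (T : ℝ) - (d + 1))]
    exact le_of_mul_le_mul_right h1 (by linarith)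
  have : (2 : ℝ) * ((b1 : ℝ) + b2) ≤ scard := by linarith
  exact_mod_cast this

/- Halving sparse recovery from an unbalanced expander (the Reduce lemma).
Here `n = 2^ℓ − 1`; the underlying bipartite graph has left vertices `Fin n`,
right vertices `Fin m'`, and neighborhoods `nbrs j` of size exactly `d`
(`d`-left-regularity); it is a `(t, 1/12)`-unbalanced expander.  `A` is its
0/1 adjacency matrix, `B`'s `j`-th column is the binary expansion of the
number `(j : ℕ) + 1 ∈ {1, …, n}`, and `H := A ⊗_r B` is the row tensor
Hadamard product (rows indexed by pairs `(i, k)`, corresponding to row index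
`(i−1)ℓ + k`). Then there is `Red : R^{m'ℓ} → Rⁿ` such that
`‖x − Red (H x)‖₀ ≤ ‖x‖₀ / 2` for every `t`-sparse `x ∈ Rⁿ`. -/
set_option maxHeartbeats 1000000 in
open Classical in
theorem expander_halving_recovery {R : Type*} [Ring R] {ℓ m' t d : ℕ}
    (hl : 1 ≤ ℓ) (ht : 1 ≤ t) (hd : 1 ≤ d) (hm' : 1 ≤ m')
    {n : ℕ} (hn : n = 2 ^ ℓ - 1)
    (nbrs : Fin n → Finset (Fin m')) (hreg : ∀ j, (nbrs j).card = d)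
    (hexp : ∀ S : Finset (Fin n), S.card ≤ t →
      (1 - 1 / 12 : ℝ) * d * S.card ≤ ((S.biUnion nbrs).card : ℝ))
    (A : Matrix (Fin m') (Fin n) R)
    (hA : ∀ (i : Fin m') (j : Fin n), A i j = if i ∈ nbrs j then 1 else 0)
    (B : Matrix (Fin ℓ) (Fin n) R)
    (hB : ∀ (k : Fin ℓ) (j : Fin n),
      B k j = if Nat.testBit ((j : ℕ) + 1) (ℓ - 1 - (k : ℕ)) then 1 else 0)
    (H : Matrix (Fin m' × Fin ℓ) (Fin n) R)
    (hH : ∀ (i : Fin m') (k : Fin ℓ) (j : Fin n), H (i, k) j = A i j * B k j) :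
    ∃ Red : (Fin m' × Fin ℓ → R) → (Fin n → R),
      ∀ x : Fin n → R, vecNnz x ≤ t →
        vecNnz (x - Red (H.mulVec x)) ≤ vecNnz x / 2 := by
  classical
  set T : ℕ := d / 2 + 1 with hTdef
  refine ⟨redFun nbrs T, ?_⟩
  intro x hx
  set w : Fin m' × Fin ℓ → R := H.mulVec x with hw
  set z : Fin n → R := redFun nbrs T w with hz
  set S : Finset (Fin n) := Finset.univ.filter (fun j => x j ≠ 0) with hS
  have hScard : S.card = vecNnz x := by rw [hS]; rfl
  have hmemS : ∀ j : Fin n, j ∈ S ↔ x j ≠ 0 := by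
    intro j; simp [hS]
  set degS : Fin m' → ℕ := fun i => (S.filter (fun j => i ∈ nbrs j)).card with hdegS
  set N : Finset (Fin m') := S.biUnion nbrs with hN
  have hdeg_eq : ∀ i, degS i = (S.filter (fun j => i ∈ nbrs j)).card := fun i => by
    rw [hdegS]
  have hmemN : ∀ i : Fin m', i ∈ N ↔ 1 ≤ degS i := by
    intro i
    rw [hdeg_eq, Nat.one_le_iff_ne_zero, ← Nat.pos_iff_ne_zero]
    constructor
    · intro hi
      obtain ⟨j, hj, hij⟩ := Finset.mem_biUnion.1 hi
      exact Finset.card_pos.2 ⟨j, Finset.mem_filter.2 ⟨hj, hij⟩⟩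
    · intro h
      obtain ⟨j, hj⟩ := Finset.card_pos.1 h
      rw [Finset.mem_filter] at hj
      exact Finset.mem_biUnion.2 ⟨j, hj.1, hj.2⟩
  -- row formulas
  have hrow_unique : ∀ (i : Fin m') (j : Fin n), j ∈ S → i ∈ nbrs j →
      (∀ j' ∈ S, i ∈ nbrs j' → j' = j) →
      ∀ k, w (i, k) = if Nat.testBit ((j : ℕ) + 1) (ℓ - 1 - (k : ℕ)) then x j else 0 := by
    intro i j hjS hij huniq k
    have : w (i, k) = ∑ j' : Fin n, H (i, k) j' * x j' := rfl
    rw [this, Finset.sum_eq_single j]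
    · rw [hH, hA, hB, if_pos hij]
      by_cases hb : Nat.testBit ((j : ℕ) + 1) (ℓ - 1 - (k : ℕ)) <;> simp [hb]
    · intro j' _ hne
      by_cases hx' : x j' = 0
      · rw [hx', mul_zero]
      · have hj'S : j' ∈ S := (hmemS j').2 hx'
        have : i ∉ nbrs j' := fun hc => hne (huniq j' hj'S hc)
        rw [hH, hA, if_neg this, zero_mul, zero_mul]
    · intro h; exact absurd (Finset.mem_univ j) h
  have hrow_zero : ∀ i : Fin m', (∀ j ∈ S, i ∉ nbrs j) → ∀ k, w (i, k) = 0 := by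
    intro i hi k
    have : w (i, k) = ∑ j' : Fin n, H (i, k) j' * x j' := rfl
    rw [this]
    refine Finset.sum_eq_zero fun j' _ => ?_
    by_cases hx' : x j' = 0
    · rw [hx', mul_zero]
    · rw [hH, hA, if_neg (hi j' ((hmemS j').2 hx')), zero_mul, zero_mul]
  have hvote_none : ∀ i : Fin m', i ∉ N → vote (n := n) w i = none := by
    intro i hi
    refine vote_none w i (hrow_zero i fun j hj hij => hi ?_)
    exact (hmemN i).2 (by
      rw [hdegS, Nat.one_le_iff_ne_zero, ← Nat.pos_iff_ne_zero, Finset.card_pos]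
      exact ⟨j, Finset.mem_filter.2 ⟨hj, hij⟩⟩)
  have hvote_unique : ∀ (i : Fin m') (j : Fin n), j ∈ S → i ∈ nbrs j → degS i = 1 →
      vote (n := n) w i = some (j, x j) := by
    intro i j hjS hij h1
    have hjmem : j ∈ S.filter (fun j => i ∈ nbrs j) := Finset.mem_filter.2 ⟨hjS, hij⟩
    rw [hdeg_eq] at h1
    have huniq : ∀ j' ∈ S, i ∈ nbrs j' → j' = j := by
      intro j' hj' hij'
      have h2 : S.filter (fun j => i ∈ nbrs j) = {j} :=
        Finset.eq_singleton_iff_unique_mem.2 ⟨hjmem, fun a ha => by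
          by_contra hne
          have : 2 ≤ (S.filter (fun j => i ∈ nbrs j)).card := by
            have : ({a, j} : Finset (Fin n)) ⊆ S.filter (fun j => i ∈ nbrs j) := by
              intro b hb
              rcases Finset.mem_insert.1 hb with rfl | hb
              · exact ha
              · rwa [Finset.mem_singleton.1 hb]
            calc 2 = ({a, j} : Finset (Fin n)).card := (Finset.card_pair hne).symm
              _ ≤ _ := Finset.card_le_card this
          omega⟩
      have := h2 ▸ Finset.mem_filter.2 ⟨hj', hij'⟩
      exact Finset.mem_singleton.1 this
    exact vote_eq hn j (x j) ((hmemS j).1 hjS) w i (hrow_unique i j hjS hij huniq)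
  -- counting sets
  set M : Finset (Fin m') := N.filter (fun i => 2 ≤ degS i) with hM
  set U : Finset (Fin m') := N.filter (fun i => degS i = 1) with hU
  have hmemM : ∀ i, i ∈ M ↔ i ∈ N ∧ 2 ≤ degS i := fun i => by
    rw [hM]; exact Finset.mem_filter
  have hMeq : N.filter (fun i => ¬ degS i = 1) = M := by
    rw [hM]
    refine Finset.filter_congr fun i hi => ?_
    have h1 := (hmemN i).1 hi
    constructor
    · intro h; omega
    · intro h; omega
  have hUM : U.card + M.card = N.card := by
    rw [← hMeq, hU, Finset.card_filter_add_card_filter_not]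
  set eM : ℕ := ∑ i ∈ M, degS i with heM
  have hdouble : ∑ i ∈ N, degS i = d * S.card := by
    have h1 : ∑ i : Fin m', degS i = d * S.card := by
      have h2 : ∀ j ∈ S, (∑ i : Fin m', if i ∈ nbrs j then 1 else 0) = d := by
        intro j _
        rw [Finset.sum_boole]
        simp [Finset.filter_univ_mem, hreg j]
      calc ∑ i : Fin m', degS i
          = ∑ i : Fin m', ∑ j ∈ S, (if i ∈ nbrs j then 1 else 0) :=
            Finset.sum_congr rfl fun i _ => by rw [hdeg_eq]; exact Finset.card_filter _ _
        _ = ∑ j ∈ S, ∑ i : Fin m', (if i ∈ nbrs j then 1 else 0) := Finset.sum_comm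
        _ = ∑ j ∈ S, d := Finset.sum_congr rfl h2
        _ = d * S.card := by rw [Finset.sum_const, smul_eq_mul, mul_comm]
    rw [← h1]
    refine Finset.sum_subset (Finset.subset_univ N) fun i _ hi => ?_
    by_contra hne
    exact hi ((hmemN i).2 (by omega))
  have hsplit : U.card + eM = d * S.card := by
    rw [← hdouble, ← Finset.sum_filter_add_sum_filter_not N (fun i => degS i = 1) degS]
    congr 1
    · rw [hU]
      rw [Finset.sum_congr rfl (fun i hi => (Finset.mem_filter.1 hi).2), Finset.sum_const,
        smul_eq_mul, mul_one]
    · rw [heM, hMeq]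
  have h2M : 2 * M.card ≤ eM := by
    rw [heM]
    calc 2 * M.card = ∑ _i ∈ M, 2 := by rw [Finset.sum_const, smul_eq_mul, mul_comm]
      _ ≤ ∑ i ∈ M, degS i := Finset.sum_le_sum fun i hi => ((hmemM i).1 hi).2
  have hst : S.card ≤ t := hScard ▸ hx
  have hexpS : (1 - 1 / 12 : ℝ) * d * S.card ≤ (N.card : ℝ) := hexp S hst
  -- bad sets
  set Bin : Finset (Fin n) := S.filter (fun j => z j ≠ x j) with hBin
  set Bout : Finset (Fin n) := Finset.univ.filter (fun j => j ∉ S ∧ z j ≠ 0) with hBout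
  -- each voter for a wrong pair is in M
  have hvoter_M : ∀ (i : Fin m') (j : Fin n) (v : R), vote (n := n) w i = some (j, v) →
      (j ∉ S ∨ v ≠ x j) → i ∈ M := by
    intro i j v hvote hbad
    have hiN : i ∈ N := by
      by_contra hc
      rw [hvote_none i hc] at hvote
      exact Option.some_ne_none _ hvote.symm
    have hdeg := (hmemN i).1 hiN
    rw [hM, Finset.mem_filter]
    refine ⟨hiN, ?_⟩
    by_contra hc
    have h1 : degS i = 1 := by omega
    rw [hdeg_eq] at h1
    obtain ⟨j₀, hj₀⟩ : ∃ j₀, j₀ ∈ S.filter (fun j => i ∈ nbrs j) :=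
      Finset.card_pos.1 (by omega)
    rw [Finset.mem_filter] at hj₀
    have := hvote_unique i j₀ hj₀.1 hj₀.2 h1
    rw [this] at hvote
    have hj : j₀ = j ∧ x j₀ = v := by
      have := Option.some_injective _ hvote
      exact ⟨congrArg Prod.fst this, congrArg Prod.snd this⟩
    rcases hbad with hb | hb
    · exact hb (hj.1 ▸ hj₀.1)
    · exact hb (hj.1 ▸ hj.2).symm
  -- Bout counting : T * Bout.card ≤ M.card
  have hBoutCount : T * Bout.card ≤ M.card := by
    set G : Fin n → Finset (Fin m') :=
      fun j => M.filter (fun i => ∃ v : R, vote (n := n) w i = some (j, v)) with hG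
    have hTG : ∀ j ∈ Bout, T ≤ (G j).card := by
      intro j hj
      rw [hBout, Finset.mem_filter] at hj
      obtain ⟨hjS, hjz⟩ := hj.2
      have hex : ∃ v : R, v ≠ 0 ∧
          T ≤ ((nbrs j).filter (fun i => vote (n := n) w i = some (j, v))).card := by
        by_contra hc
        exact hjz (by rw [hz, redFun, dif_neg hc])
      obtain ⟨v, hv, hcard⟩ := hex
      refine le_trans hcard (Finset.card_le_card ?_)
      intro i hi
      rw [Finset.mem_filter] at hi
      rw [hG, Finset.mem_filter]
      exact ⟨hvoter_M i j v hi.2 (Or.inl hjS), ⟨v, hi.2⟩⟩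
    have hdisj : ∀ j₁ ∈ Bout, ∀ j₂ ∈ Bout, j₁ ≠ j₂ → Disjoint (G j₁) (G j₂) := by
      intro j₁ _ j₂ _ hne
      rw [Finset.disjoint_left]
      intro i h1 h2
      rw [hG, Finset.mem_filter] at h1 h2
      obtain ⟨v₁, hv₁⟩ := h1.2
      obtain ⟨v₂, hv₂⟩ := h2.2
      rw [hv₁] at hv₂
      exact hne (congrArg Prod.fst (Option.some_injective _ hv₂))
    calc T * Bout.card = ∑ _j ∈ Bout, T := by rw [Finset.sum_const, smul_eq_mul, mul_comm]
      _ ≤ ∑ j ∈ Bout, (G j).card := Finset.sum_le_sum hTG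
      _ = (Bout.biUnion G).card := (Finset.card_biUnion hdisj).symm
      _ ≤ M.card := Finset.card_le_card (by
          intro i hi
          rw [Finset.mem_biUnion] at hi
          obtain ⟨j, _, hij⟩ := hi
          exact (Finset.mem_filter.1 hij).1)
  -- Bin counting : (d - d/2) * Bin.card ≤ eM
  have hBinCount : (d - d / 2) * Bin.card ≤ eM := by
    have hperj : ∀ j ∈ Bin, d - d / 2 ≤ (M.filter (fun i => i ∈ nbrs j)).card := by
      intro j hj
      rw [hBin, Finset.mem_filter] at hj
      obtain ⟨hjS, hjz⟩ := hj
      have hxj : x j ≠ 0 := (hmemS j).1 hjS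
      have hMsub : ∀ i ∈ nbrs j, i ∉ M → vote (n := n) w i = some (j, x j) := by
        intro i hij hiM
        have hiN : i ∈ N := (hmemN i).2 (by
          rw [hdegS, Nat.one_le_iff_ne_zero, ← Nat.pos_iff_ne_zero, Finset.card_pos]
          exact ⟨j, Finset.mem_filter.2 ⟨hjS, hij⟩⟩)
        have hdeg1 : degS i = 1 := by
          have h1 := (hmemN i).1 hiN
          have h2 : ¬ (2 ≤ degS i) := fun hc => hiM (Finset.mem_filter.2 ⟨hiN, hc⟩)
          omega
        exact hvote_unique i j hjS hij hdeg1
      by_cases hcase : ∃ v : R, v ≠ 0 ∧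
          T ≤ ((nbrs j).filter (fun i => vote (n := n) w i = some (j, v))).card
      · -- z j = choose ≠ x j; voters for (j, choose) are all in M
        have hzj : z j = hcase.choose := by rw [hz, redFun, dif_pos hcase]
        obtain ⟨hv0, hvT⟩ := hcase.choose_spec
        have hvne : hcase.choose ≠ x j := fun h => hjz (hzj.trans h)
        refine le_trans (le_trans (by omega) hvT) (Finset.card_le_card ?_)
        intro i hi
        rw [Finset.mem_filter] at hi
        exact Finset.mem_filter.2 ⟨hvoter_M i j hcase.choose hi.2 (Or.inr hvne), hi.1⟩
      · -- correct value did not reach threshold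
        push_neg at hcase
        have hlt := hcase (x j) hxj
        -- nbrs j \ (filter correct) ⊆ M-part
        have hsub : (nbrs j).filter (fun i => i ∉ M) ⊆
            (nbrs j).filter (fun i => vote (n := n) w i = some (j, x j)) := by
          intro i hi
          rw [Finset.mem_filter] at hi ⊢
          exact ⟨hi.1, hMsub i hi.1 hi.2⟩
        have hcard1 : ((nbrs j).filter (fun i => i ∉ M)).card ≤ T - 1 := by
          have := Finset.card_le_card hsub
          omega
        have hcard2 : ((nbrs j).filter (fun i => i ∈ M)).card +
            ((nbrs j).filter (fun i => i ∉ M)).card = d := by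
          have h0 := Finset.card_filter_add_card_filter_not
            (s := nbrs j) (p := fun i => i ∈ M)
          rw [hreg] at h0
          exact h0
        have heq : (nbrs j).filter (fun i => i ∈ M) = M.filter (fun i => i ∈ nbrs j) := by
          ext i; simp only [Finset.mem_filter]; tauto
        rw [← heq]
        omega
    have hdouble2 : ∑ j ∈ S, (M.filter (fun i => i ∈ nbrs j)).card = eM := by
      calc ∑ j ∈ S, (M.filter (fun i => i ∈ nbrs j)).card
          = ∑ j ∈ S, ∑ i ∈ M, (if i ∈ nbrs j then 1 else 0) :=
            Finset.sum_congr rfl fun j _ => Finset.card_filter _ _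
        _ = ∑ i ∈ M, ∑ j ∈ S, (if i ∈ nbrs j then 1 else 0) := Finset.sum_comm
        _ = ∑ i ∈ M, degS i := Finset.sum_congr rfl fun i _ => by
            rw [hdeg_eq]; exact (Finset.card_filter _ _).symm
        _ = eM := heM.symm
    calc (d - d / 2) * Bin.card = ∑ _j ∈ Bin, (d - d / 2) := by
          rw [Finset.sum_const, smul_eq_mul, mul_comm]
      _ ≤ ∑ j ∈ Bin, (M.filter (fun i => i ∈ nbrs j)).card := Finset.sum_le_sum hperj
      _ ≤ ∑ j ∈ S, (M.filter (fun i => i ∈ nbrs j)).card := by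
          refine Finset.sum_le_sum_of_subset (Finset.filter_subset _ _)
      _ = eM := hdouble2
  have hmain : 2 * (Bin.card + Bout.card) ≤ S.card :=
    arith_main d T (d - d / 2) S.card N.card U.card M.card eM Bin.card Bout.card
      hd hexpS hUM hsplit h2M hBoutCount hBinCount (by omega) (by omega)
  -- error support
  have herr : vecNnz (x - z) ≤ Bin.card + Bout.card := by
    have hsub : Finset.univ.filter (fun j => (x - z) j ≠ 0) ⊆ Bin ∪ Bout := by
      intro j hj
      rw [Finset.mem_filter] at hj
      have hj2 : x j - z j ≠ 0 := by simpa using hj.2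
      by_cases hjS : j ∈ S
      · refine Finset.mem_union_left _ (Finset.mem_filter.2 ⟨hjS, fun h => hj2 ?_⟩)
        rw [h, sub_self]
      · have hxj : x j = 0 := by
          by_contra hc; exact hjS ((hmemS j).2 hc)
        refine Finset.mem_union_right _ (Finset.mem_filter.2
          ⟨Finset.mem_univ j, hjS, fun h => hj2 ?_⟩)
        rw [hxj, h, sub_zero]
    calc vecNnz (x - z) ≤ (Bin ∪ Bout).card := Finset.card_le_card hsub
      _ ≤ Bin.card + Bout.card := Finset.card_union_le _ _
  rw [← hScard, Nat.le_div_iff_mul_le (by norm_num : 0 < 2)]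
  omega
end

section
/- (Exact sparse recovery from an unbalanced expander.) Let R be a ring, ℓ ≥ 1, n = 2^ℓ − 1, and let t, d, m' ≥ 1 be integers. Let A be the m'×n adjacency matrix (with entries in {0_R, 1_R}) of a d-left-regular bipartite graph with left vertex set [n] and right vertex set [m'] that is a (t, 1/12)-unbalanced expander, let B be the ℓ×n matrix with entries in {0_R, 1_R} whose j-th column is the binary expansion of j, and let H := A ⊗_r B ∈ R^{(m'ℓ)×n}. Then there exists a function Rec : R^{m'ℓ} → Rⁿ such that Rec(Hx) = x for every x ∈ Rⁿ with ‖x‖₀ ≤ t. In particular, the linear map x ↦ Hx is injective on the set of t-sparse vectors of Rⁿ. -/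
open Matrix

section Aux

variable {m' n : ℕ}

open Classical in
/-- Double counting edges: the total degree (into a set `S` of left vertices)
over all right vertices equals `d * S.card`. -/
lemma aux_degsum {d : ℕ} (nbrs : Fin n → Finset (Fin m'))
    (hreg : ∀ j, (nbrs j).card = d) (S : Finset (Fin n)) :
    ∑ i : Fin m', (S.filter (fun j => i ∈ nbrs j)).card = d * S.card := by
  have h1 : ∀ i : Fin m', (S.filter (fun j => i ∈ nbrs j)).card
      = ∑ j ∈ S, if i ∈ nbrs j then 1 else 0 := by
    intro i; rw [Finset.card_filter]
  simp_rw [h1]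
  rw [Finset.sum_comm]
  have h2 : ∀ j : Fin n, (∑ i : Fin m', if i ∈ nbrs j then 1 else 0) = d := by
    intro j
    rw [Finset.sum_ite_mem, Finset.univ_inter, Finset.sum_const, smul_eq_mul, mul_one, hreg]
  simp_rw [h2]
  rw [Finset.sum_const, smul_eq_mul, mul_comm]

open Classical in
/-- From expansion of `S` (with `ε = 1/12`) and `|T| ≤ |S|`, there is a right
vertex that is a unique neighbor of `S` and has at most one neighbor in `T`. -/
lemma aux_good {d t : ℕ} (hd : 1 ≤ d) (nbrs : Fin n → Finset (Fin m'))
    (hreg : ∀ j, (nbrs j).card = d)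
    (hexp : ∀ S : Finset (Fin n), S.card ≤ t →
      (1 - 1 / 12 : ℝ) * d * S.card ≤ ((S.biUnion nbrs).card : ℝ))
    (S T : Finset (Fin n)) (hSt : S.card ≤ t) (hTS : T.card ≤ S.card)
    (hSpos : 0 < S.card) :
    ∃ i : Fin m', (S.filter (fun j => i ∈ nbrs j)).card = 1 ∧
      (T.filter (fun j => i ∈ nbrs j)).card ≤ 1 := by
  by_contra hcon
  push_neg at hcon
  set A' : Finset (Fin m') :=
    Finset.univ.filter (fun i => (S.filter (fun j => i ∈ nbrs j)).card = 1) with hA'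
  -- every unique neighbor of S sees ≥ 2 elements of T
  have h1 : 2 * A'.card ≤ d * S.card := by
    calc 2 * A'.card = ∑ _i ∈ A', 2 := by rw [Finset.sum_const, smul_eq_mul, mul_comm]
      _ ≤ ∑ i ∈ A', (T.filter (fun j => i ∈ nbrs j)).card := by
          refine Finset.sum_le_sum fun i hi => ?_
          have := hcon i (Finset.mem_filter.mp hi).2
          omega
      _ ≤ ∑ i : Fin m', (T.filter (fun j => i ∈ nbrs j)).card :=
          Finset.sum_le_sum_of_subset (Finset.subset_univ _)
      _ = d * T.card := aux_degsum nbrs hreg T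
      _ ≤ d * S.card := Nat.mul_le_mul_left d hTS
  -- unique-neighbor count lower bound
  have h2 : 2 * (S.biUnion nbrs).card ≤ d * S.card + A'.card := by
    have hstep : ∀ i ∈ S.biUnion nbrs,
        2 ≤ (S.filter (fun j => i ∈ nbrs j)).card
          + (if (S.filter (fun j => i ∈ nbrs j)).card = 1 then 1 else 0) := by
      intro i hi
      obtain ⟨j, hjS, hji⟩ := Finset.mem_biUnion.mp hi
      have hpos : 0 < (S.filter (fun j => i ∈ nbrs j)).card :=
        Finset.card_pos.mpr ⟨j, Finset.mem_filter.mpr ⟨hjS, hji⟩⟩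
      by_cases h : (S.filter (fun j => i ∈ nbrs j)).card = 1 <;> simp [h] <;> omega
    calc 2 * (S.biUnion nbrs).card = ∑ _i ∈ S.biUnion nbrs, 2 := by
          rw [Finset.sum_const, smul_eq_mul, mul_comm]
      _ ≤ ∑ i ∈ S.biUnion nbrs, ((S.filter (fun j => i ∈ nbrs j)).card
            + (if (S.filter (fun j => i ∈ nbrs j)).card = 1 then 1 else 0)) :=
          Finset.sum_le_sum hstep
      _ = (∑ i ∈ S.biUnion nbrs, (S.filter (fun j => i ∈ nbrs j)).card)
            + ∑ i ∈ S.biUnion nbrs,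
              (if (S.filter (fun j => i ∈ nbrs j)).card = 1 then 1 else 0) :=
          Finset.sum_add_distrib
      _ ≤ d * S.card + A'.card := by
          refine add_le_add ?_ ?_
          · calc (∑ i ∈ S.biUnion nbrs, (S.filter (fun j => i ∈ nbrs j)).card)
                ≤ ∑ i : Fin m', (S.filter (fun j => i ∈ nbrs j)).card :=
                Finset.sum_le_sum_of_subset (Finset.subset_univ _)
              _ = d * S.card := aux_degsum nbrs hreg S
          · rw [← Finset.card_filter]
            exact Finset.card_le_card
              (Finset.filter_subset_filter _ (Finset.subset_univ _))
  have h3 : 4 * (S.biUnion nbrs).card ≤ 3 * (d * S.card) := by omega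
  have h4 := hexp S hSt
  have h5 : (1 : ℝ) ≤ (d : ℝ) * (S.card : ℝ) := by
    have : (1 : ℕ) ≤ d * S.card := Nat.one_le_iff_ne_zero.mpr (by positivity)
    exact_mod_cast this
  have h3' : (4 : ℝ) * ((S.biUnion nbrs).card : ℝ) ≤ 3 * ((d : ℝ) * (S.card : ℝ)) := by
    exact_mod_cast h3
  nlinarith [h4, h3', h5]

end Aux

/- Exact sparse recovery from an unbalanced expander.
Here `n = 2^ℓ − 1`; the underlying bipartite graph has left vertices `Fin n`,
right vertices `Fin m'`, and neighborhoods `nbrs j` of size exactly `d`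
(`d`-left-regularity); it is a `(t, 1/12)`-unbalanced expander.  `A` is its
0/1 adjacency matrix, `B`'s `j`-th column is the binary expansion of the
number `(j : ℕ) + 1 ∈ {1, …, n}`, and `H := A ⊗_r B` is the row tensor
Hadamard product (rows indexed by pairs `(i, k)`, corresponding to row index
`(i−1)ℓ + k`). Then there is `Rec : R^{m'ℓ} → Rⁿ` with `Rec (H x) = x` for
every `t`-sparse `x ∈ Rⁿ`; in particular `x ↦ H x` is injective on the set
of `t`-sparse vectors. -/
open Classical in
theorem expander_exact_recovery {R : Type*} [Ring R] {ℓ m' t d : ℕ}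
    (hl : 1 ≤ ℓ) (ht : 1 ≤ t) (hd : 1 ≤ d) (hm' : 1 ≤ m')
    {n : ℕ} (hn : n = 2 ^ ℓ - 1)
    (nbrs : Fin n → Finset (Fin m')) (hreg : ∀ j, (nbrs j).card = d)
    (hexp : ∀ S : Finset (Fin n), S.card ≤ t →
      (1 - 1 / 12 : ℝ) * d * S.card ≤ ((S.biUnion nbrs).card : ℝ))
    (A : Matrix (Fin m') (Fin n) R)
    (hA : ∀ (i : Fin m') (j : Fin n), A i j = if i ∈ nbrs j then 1 else 0)
    (B : Matrix (Fin ℓ) (Fin n) R)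
    (hB : ∀ (k : Fin ℓ) (j : Fin n),
      B k j = if Nat.testBit ((j : ℕ) + 1) (ℓ - 1 - (k : ℕ)) then 1 else 0)
    (H : Matrix (Fin m' × Fin ℓ) (Fin n) R)
    (hH : ∀ (i : Fin m') (k : Fin ℓ) (j : Fin n), H (i, k) j = A i j * B k j) :
    (∃ Rec : (Fin m' × Fin ℓ → R) → (Fin n → R),
      ∀ x : Fin n → R, vecNnz x ≤ t → Rec (H.mulVec x) = x) ∧
    ∀ x y : Fin n → R, vecNnz x ≤ t → vecNnz y ≤ t →
      H.mulVec x = H.mulVec y → x = y := by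
  -- numbers (j:ℕ)+1 are nonzero and < 2^ℓ
  have hnlt : ∀ j : Fin n, (j : ℕ) + 1 < 2 ^ ℓ := by
    intro j
    have h1 := j.2
    have h2 : 1 ≤ 2 ^ ℓ := Nat.one_le_two_pow
    omega
  -- some tested bit is set
  have bitfact : ∀ j : Fin n, ∃ k : Fin ℓ,
      Nat.testBit ((j : ℕ) + 1) (ℓ - 1 - (k : ℕ)) = true := by
    intro j
    by_contra hcon
    push_neg at hcon
    have hz : ((j : ℕ) + 1) = 0 := by
      apply Nat.eq_of_testBit_eq
      intro p
      rw [Nat.zero_testBit]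
      rcases lt_or_ge p ℓ with hp | hp
      · have hk : ℓ - 1 - (ℓ - 1 - p) = p := by omega
        have := hcon ⟨ℓ - 1 - p, by omega⟩
        simpa [hk, Bool.not_eq_true] using this
      · exact Nat.testBit_eq_false_of_lt (lt_of_lt_of_le (hnlt j) (Nat.pow_le_pow_right (by norm_num) hp))
    omega
  -- the tested bits determine the column index
  have bitinj : ∀ j j' : Fin n,
      (∀ k : Fin ℓ, Nat.testBit ((j : ℕ) + 1) (ℓ - 1 - (k : ℕ))
        = Nat.testBit ((j' : ℕ) + 1) (ℓ - 1 - (k : ℕ))) → j = j' := by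
    intro j j' hbits
    have : (j : ℕ) + 1 = (j' : ℕ) + 1 := by
      apply Nat.eq_of_testBit_eq
      intro p
      rcases lt_or_ge p ℓ with hp | hp
      · have hk : ℓ - 1 - (ℓ - 1 - p) = p := by omega
        have := hbits ⟨ℓ - 1 - p, by omega⟩
        simpa [hk] using this
      · rw [Nat.testBit_eq_false_of_lt (lt_of_lt_of_le (hnlt j) (Nat.pow_le_pow_right (by norm_num) hp)),
            Nat.testBit_eq_false_of_lt (lt_of_lt_of_le (hnlt j') (Nat.pow_le_pow_right (by norm_num) hp))]
    exact Fin.ext (by omega)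
  -- block structure of H·x
  have block : ∀ (x : Fin n → R) (i : Fin m') (k : Fin ℓ),
      H.mulVec x (i, k)
        = ∑ j ∈ (Finset.univ.filter (fun j => x j ≠ 0)).filter (fun j => i ∈ nbrs j),
            B k j * x j := by
    intro x i k
    rw [Finset.filter_filter]
    show ∑ j, H (i, k) j * x j = _
    have hcond : ∀ j ∈ (Finset.univ : Finset (Fin n)), H (i, k) j * x j ≠ 0 →
        x j ≠ 0 ∧ i ∈ nbrs j := by
      intro j _ hne
      constructor
      · intro h0; exact hne (by rw [h0, mul_zero])
      · by_contra h; exact hne (by rw [hH, hA, if_neg h, zero_mul, zero_mul])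
    rw [← Finset.sum_filter_of_ne hcond]
    refine Finset.sum_congr rfl fun j hj => ?_
    obtain ⟨-, -, hji⟩ := Finset.mem_filter.mp hj
    rw [hH, hA, if_pos hji, one_mul]
  -- a common nonzero coordinate of x and y when Hx = Hy
  have agree : ∀ x y : Fin n → R, vecNnz x ≤ t → vecNnz y ≤ vecNnz x →
      0 < vecNnz x → H.mulVec x = H.mulVec y → ∃ j, x j ≠ 0 ∧ x j = y j := by
    intro x y hxt hyx hx0 heq
    obtain ⟨i, hi1, hi2⟩ := aux_good hd nbrs hreg hexp
      (Finset.univ.filter (fun j => x j ≠ 0)) (Finset.univ.filter (fun j => y j ≠ 0))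
      hxt hyx hx0
    obtain ⟨j, hj⟩ := Finset.card_eq_one.mp hi1
    have hjmem : j ∈ (Finset.univ.filter (fun j => x j ≠ 0)).filter (fun j => i ∈ nbrs j) := by
      rw [hj]; exact Finset.mem_singleton_self j
    obtain ⟨hjx, hji⟩ := Finset.mem_filter.mp hjmem
    have hxj : x j ≠ 0 := (Finset.mem_filter.mp hjx).2
    have hb : ∀ k : Fin ℓ, B k j * x j
        = ∑ j' ∈ (Finset.univ.filter (fun j' => y j' ≠ 0)).filter (fun j' => i ∈ nbrs j'),
            B k j' * y j' := by
      intro k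
      have h1 := congrFun heq (i, k)
      rw [block x i k, block y i k, hj, Finset.sum_singleton] at h1
      exact h1
    rcases Nat.le_one_iff_eq_zero_or_eq_one.mp hi2 with hT | hT
    · -- T sees nothing at i: contradiction
      rw [Finset.card_eq_zero] at hT
      obtain ⟨k, hk⟩ := bitfact j
      have := hb k
      rw [hT, Finset.sum_empty, hB, if_pos hk, one_mul] at this
      exact absurd this hxj
    · obtain ⟨j', hj'⟩ := Finset.card_eq_one.mp hT
      have hj'mem : j' ∈ (Finset.univ.filter (fun j' => y j' ≠ 0)).filter
          (fun j' => i ∈ nbrs j') := by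
        rw [hj']; exact Finset.mem_singleton_self j'
      have hyj' : y j' ≠ 0 := (Finset.mem_filter.mp (Finset.mem_filter.mp hj'mem).1).2
      have hb' : ∀ k : Fin ℓ, B k j * x j = B k j' * y j' := by
        intro k
        have := hb k
        rwa [hj', Finset.sum_singleton] at this
      have hjj' : j = j' := by
        apply bitinj
        intro k
        by_contra hne
        have hbk := hb' k
        rcases Bool.eq_false_or_eq_true (Nat.testBit ((j : ℕ) + 1) (ℓ - 1 - (k : ℕ))) with hb1 | hb1 <;>
          rcases Bool.eq_false_or_eq_true (Nat.testBit ((j' : ℕ) + 1) (ℓ - 1 - (k : ℕ))) with hb2 | hb2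
        · exact hne (hb1.trans hb2.symm)
        · rw [hB, hB, hb1, hb2] at hbk
          simp only [Bool.false_eq_true, if_false, if_true, ite_true, ite_false,
            zero_mul, one_mul] at hbk
          first
          | exact hxj hbk | exact hxj hbk.symm | exact hyj' hbk | exact hyj' hbk.symm
        · rw [hB, hB, hb1, hb2] at hbk
          simp only [Bool.false_eq_true, if_false, if_true, ite_true, ite_false,
            zero_mul, one_mul] at hbk
          first
          | exact hxj hbk | exact hxj hbk.symm | exact hyj' hbk | exact hyj' hbk.symm
        · exact hne (hb1.trans hb2.symm)
      subst hjj'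
      obtain ⟨k, hk⟩ := bitfact j
      have := hb' k
      rw [hB, if_pos hk, one_mul, one_mul] at this
      exact ⟨j, hxj, this⟩
  -- vecNnz unfolds
  have nnz_def : ∀ x : Fin n → R, vecNnz x = (Finset.univ.filter (fun j => x j ≠ 0)).card := by
    intro x; rfl
  have nnz_zero : ∀ x : Fin n → R, vecNnz x = 0 → ∀ j, x j = 0 := by
    intro x hx j
    by_contra hxj
    have : j ∈ Finset.univ.filter (fun j => x j ≠ 0) := Finset.mem_filter.mpr ⟨Finset.mem_univ j, hxj⟩
    rw [nnz_def, Finset.card_eq_zero] at hx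
    rw [hx] at this
    exact absurd this (Finset.notMem_empty j)
  -- nnz of an update to zero
  have nnz_update : ∀ (x : Fin n → R) (j : Fin n), x j ≠ 0 →
      vecNnz (Function.update x j 0) + 1 = vecNnz x := by
    intro x j hxj
    have hset : Finset.univ.filter (fun j' => Function.update x j 0 j' ≠ 0)
        = (Finset.univ.filter (fun j' => x j' ≠ 0)).erase j := by
      ext j'
      simp only [Finset.mem_filter, Finset.mem_erase, Finset.mem_univ, true_and]
      by_cases h : j' = j
      · subst h; simp [Function.update_self]
      · simp [Function.update_of_ne h, h]
    have hjmem : j ∈ Finset.univ.filter (fun j' => x j' ≠ 0) :=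
      Finset.mem_filter.mpr ⟨Finset.mem_univ j, hxj⟩
    have hpos : 0 < (Finset.univ.filter (fun j' => x j' ≠ 0)).card :=
      Finset.card_pos.mpr ⟨j, hjmem⟩
    rw [nnz_def, nnz_def, hset, Finset.card_erase_of_mem hjmem]
    omega
  -- injectivity by strong induction (peeling)
  have inj : ∀ N (x y : Fin n → R), vecNnz x + vecNnz y ≤ N → vecNnz x ≤ t →
      vecNnz y ≤ t → H.mulVec x = H.mulVec y → x = y := by
    intro N
    induction N with
    | zero =>
      intro x y hsum _ _ _
      funext j
      rw [nnz_zero x (by omega) j, nnz_zero y (by omega) j]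
    | succ N ih =>
      intro x y hsum hxt hyt heq
      -- peeling step: remove a common nonzero coordinate
      have peel : ∀ j : Fin n, x j ≠ 0 → x j = y j → x = y := by
        intro j hxj hxyj
        have hyj : y j ≠ 0 := hxyj ▸ hxj
        set x' := Function.update x j 0 with hx'
        set y' := Function.update y j 0 with hy'
        have heq' : H.mulVec x' = H.mulVec y' := by
          funext r
          have expand : ∀ v : Fin n → R, H.mulVec v r
              = H r j * v j + ∑ j' ∈ Finset.univ.erase j, H r j' * v j' := by
            intro v
            exact (Finset.add_sum_erase _ (fun j' => H r j' * v j') (Finset.mem_univ j)).symm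
          have hupd : ∀ (v : Fin n → R), ∑ j' ∈ Finset.univ.erase j, H r j' * Function.update v j 0 j'
              = ∑ j' ∈ Finset.univ.erase j, H r j' * v j' := by
            intro v
            refine Finset.sum_congr rfl fun j' hj' => ?_
            rw [Function.update_of_ne (Finset.ne_of_mem_erase hj')]
          have h1 := congrFun heq r
          rw [expand x, expand y, hxyj] at h1
          have h2 : ∑ j' ∈ Finset.univ.erase j, H r j' * x j'
              = ∑ j' ∈ Finset.univ.erase j, H r j' * y j' := by
            exact add_left_cancel h1
          rw [expand x', expand y', hx', hy', Function.update_self, Function.update_self,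
            hupd x, hupd y, h2]
        have hnx := nnz_update x j hxj
        have hny := nnz_update y j hyj
        rw [← hx'] at hnx
        rw [← hy'] at hny
        have hx'y' : x' = y' := by
          apply ih x' y' (by omega) (by omega) (by omega) heq'
        funext j''
        by_cases h : j'' = j
        · subst h; exact hxyj
        · have := congrFun hx'y' j''
          rwa [hx', hy', Function.update_of_ne h, Function.update_of_ne h] at this
      rcases le_total (vecNnz y) (vecNnz x) with hle | hle
      · rcases Nat.eq_zero_or_pos (vecNnz x) with h0 | hpos
        · funext j
          rw [nnz_zero x h0 j, nnz_zero y (by omega) j]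
        · obtain ⟨j, hxj, hxyj⟩ := agree x y hxt hle hpos heq
          exact peel j hxj hxyj
      · rcases Nat.eq_zero_or_pos (vecNnz y) with h0 | hpos
        · funext j
          rw [nnz_zero x (by omega) j, nnz_zero y h0 j]
        · obtain ⟨j, hyj, hyxj⟩ := agree y x hyt hle hpos heq.symm
          exact peel j (hyxj ▸ hyj) hyxj.symm
  have inj' : ∀ x y : Fin n → R, vecNnz x ≤ t → vecNnz y ≤ t →
      H.mulVec x = H.mulVec y → x = y :=
    fun x y hx hy => inj (vecNnz x + vecNnz y) x y le_rfl hx hy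
  refine ⟨⟨fun u => if h : ∃ x, vecNnz x ≤ t ∧ H.mulVec x = u
      then Classical.choose h else 0, ?_⟩, inj'⟩
  intro x hx
  have hex : ∃ x', vecNnz x' ≤ t ∧ H.mulVec x' = H.mulVec x := ⟨x, hx, rfl⟩
  simp only [dif_pos hex]
  obtain ⟨h1, h2⟩ := Classical.choose_spec hex
  exact inj' _ x h1 hx h2
end
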